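/- arXiv:1504.02075 — 2 statements merged into one kernel-verified Lean document; each statement's English description precedes it below -/
import Mathlib

section
/- Let m, n be coprime positive integers. For any (m,n)-Dyck path D, codinv(D̄) = codinv(D), where D̄ is the rank complement of D; equivalently, the rank complement preserves the dinv statistic. -/
open Nat

/-- Number of north steps among the first `i` steps of the path `P`
(`true` = north step `N`, `false` = east step `E`). -/
def nSteps (P : List Bool) (i : ℕ) : ℕ := (P.take i).count true

/-- Number of east steps among the first `i` steps. -/
def eSteps (P : List Bool) (i : ℕ) : ℕ := (P.take i).count false

/-- Rank `m*b - n*a` of the `i`-th lattice point `(a,b)` of the path. -/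
def rank (m n : ℕ) (P : List Bool) (i : ℕ) : ℤ :=
  (m : ℤ) * nSteps P i - (n : ℤ) * eSteps P i

/-- A lattice path from `(0,0)` to `(m,n)`: `m+n` unit steps, `n` of them north. -/
def IsPath (m n : ℕ) (P : List Bool) : Prop :=
  P.length = m + n ∧ P.count true = n

/-- An `(m,n)`-Dyck path: a path staying weakly above the diagonal,
equivalently with all ranks nonnegative. -/
def IsDyck (m n : ℕ) (P : List Bool) : Prop :=
  IsPath m n P ∧ ∀ i ≤ m + n, 0 ≤ rank m n P i

/-- The set of ranks of the first `m+n` lattice points of the path. -/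
def rankSet (m n : ℕ) (P : List Bool) : Finset ℤ :=
  (Finset.range (m + n)).image (rank m n P)

/-- Ranks of south ends (starting points of north steps). -/
def southRanks (m n : ℕ) (P : List Bool) : Finset ℤ :=
  ((Finset.range (m + n)).filter (fun i => P.getD i false = true)).image (rank m n P)

/-- Ranks of west ends (starting points of east steps). -/
def westRanks (m n : ℕ) (P : List Bool) : Finset ℤ :=
  ((Finset.range (m + n)).filter (fun i => P.getD i true = false)).image (rank m n P)

/-- Transpose of a path: reverse the word and exchange `N` and `E`. -/
def transpose (P : List Bool) : List Bool := (P.map (fun b => !b)).reverse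

/-- `D'` is the rank complement of `D`: its rank set is `M - r(D)`
where `M` is the maximum rank of `D`. -/
def IsRankComplement (m n : ℕ) (D D' : List Bool) : Prop :=
  ∃ M : ℤ, IsGreatest (↑(rankSet m n D) : Set ℤ) M ∧
    rankSet m n D' = (rankSet m n D).image (fun r => M - r)

/-- A partition, encoded as a weakly decreasing list of positive integers. -/
def IsPartition (L : List ℕ) : Prop :=
  L.Pairwise (· ≥ ·) ∧ ∀ x ∈ L, 0 < x

/-- Hook length of the cell in (0-based) row `i`, column `j`. -/
def hook (L : List ℕ) (i j : ℕ) : ℕ :=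
  L.getD i 0 - j + (L.drop (i + 1)).countP (fun x => decide (j < x))

/-- `L` is an `n`-core: no hook length is divisible by `n`. -/
def IsCore (n : ℕ) (L : List ℕ) : Prop :=
  ∀ i < L.length, ∀ j < L.getD i 0, ¬ (n ∣ hook L i j)

/-- The set of first-column hook lengths of `L`. -/
def firstColHooks (L : List ℕ) : Finset ℕ :=
  (Finset.range L.length).image (fun i => hook L i 0)

/-- Conjugate (transpose) partition. -/
def conjugate (L : List ℕ) : List ℕ :=
  (List.range (L.getD 0 0)).map (fun j => L.countP (fun x => decide (j < x)))

/-- `H` is `n`-flush: no element is a multiple of `n`, and it is closed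
under subtracting `n` while staying positive. -/
def IsFlush (n : ℕ) (H : Finset ℕ) : Prop :=
  (∀ h ∈ H, ¬ (n ∣ h)) ∧ ∀ h ∈ H, n < h → h - n ∈ H

/-- `s_i^n(H)`: the maximum of `((n+H) ∪ {i}) ∩ (i + nℤ)`. -/
def sFun (n : ℕ) (H : Finset ℕ) (i : ℕ) : ℕ :=
  (insert i ((H.filter (fun h => h % n = i % n)).image (fun h => h + n))).max'
    (Finset.insert_nonempty _ _)

/-- `S^n(H) = {s_0, ..., s_{n-1}}`. -/
def sSet (n : ℕ) (H : Finset ℕ) : Finset ℕ := (Finset.range n).image (sFun n H)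

/-- The lattice point `(a,b)` lies strictly to the right of the path `D`
inside the `m × n` rectangle: every lattice point of `D` at height `b`
has `x`-coordinate less than `a`. -/
def StrictlyRightOf (m n : ℕ) (D : List Bool) (a b : ℕ) : Prop :=
  a ≤ m ∧ b ≤ n ∧ ∀ i ≤ m + n, (D.take i).count true = b → (D.take i).count false < a

/-- The positive ranks of lattice points lying strictly to the right of `D`. -/
def andersonSet (m n : ℕ) (D : List Bool) : Set ℕ :=
  {h | 0 < h ∧ ∃ a b : ℕ, StrictlyRightOf m n D a b ∧ (h : ℤ) = (m : ℤ) * b - (n : ℤ) * a}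

/-- The `x`-coordinate of the vertical step of `D` at height `y`
(the number of east steps taken at heights `≤ y`). -/
def southX (D : List Bool) (y : ℕ) : ℕ :=
  (List.range D.length).countP
    (fun i => decide (D.getD i true = false ∧ (D.take i).count true ≤ y))

/-- The partition formed by the cells above the path `D`
inside a rectangle of height `n`. -/
def pathPartition (n : ℕ) (D : List Bool) : List ℕ :=
  (((List.range n).reverse).map (fun y => southX D y)).filter (fun x => decide (0 < x))

/-- Arm of the cell `(i,j)` of `L`. -/
def armL (L : List ℕ) (i j : ℕ) : ℕ := L.getD i 0 - (j + 1)

/-- Leg of the cell `(i,j)` of `L`. -/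
def legL (L : List ℕ) (i j : ℕ) : ℕ := (L.drop (i + 1)).countP (fun x => decide (j < x))

/-- The dinv statistic of an `(m,n)`-Dyck path: the number of cells `c` of the
partition above the path with `arm(c)/(leg(c)+1) ≤ m/n < (arm(c)+1)/leg(c)`. -/
def dinv (m n : ℕ) (D : List Bool) : ℕ :=
  ((Finset.range (pathPartition n D).length ×ˢ Finset.range m).filter
    (fun p => p.2 < (pathPartition n D).getD p.1 0 ∧
      armL (pathPartition n D) p.1 p.2 * n ≤ m * (legL (pathPartition n D) p.1 p.2 + 1) ∧
      m * legL (pathPartition n D) p.1 p.2 < n * (armL (pathPartition n D) p.1 p.2 + 1))).card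

/-- `codinv(D) = #{(r_s, r_w) : r_s ∈ S(D), r_w ∈ W(D), r_s < r_w}`. -/
def codinv (m n : ℕ) (D : List Bool) : ℕ :=
  ((southRanks m n D ×ˢ westRanks m n D).filter (fun p => p.1 < p.2)).card

/-- The skew length of an `(m,n)`-core: the number of cells lying both in an
`n`-row (a row `i` with `h_i + n ∈ S^n(H_λ)`) and in the `m`-boundary
(hook length `< m`). -/
def skewLength (m n : ℕ) (L : List ℕ) : ℕ :=
  ((Finset.range L.length ×ˢ Finset.range (L.headD 0)).filter
    (fun p => p.2 < L.getD p.1 0 ∧ hook L p.1 p.2 < m ∧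
      hook L p.1 0 + n ∈ sSet n (firstColHooks L))).card



-- ### auxiliary lemmas

lemma count_true_add_count_false (l : List Bool) : l.count true + l.count false = l.length := by
  induction l with
  | nil => simp
  | cons a t ih => cases a <;> simp [List.count_cons] <;> omega

lemma nSteps_add_eSteps (D : List Bool) (i : ℕ) (h : i ≤ D.length) :
    nSteps D i + eSteps D i = i := by
  have := count_true_add_count_false (D.take i)
  simpa [nSteps, eSteps, List.length_take, min_eq_left h] using this

lemma rank_zero (m n : ℕ) (D : List Bool) : rank m n D 0 = 0 := by
  simp [rank, nSteps, eSteps]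

lemma getD_eq_getElem (l : List Bool) (i : ℕ) (h : i < l.length) (d : Bool) :
    l.getD i d = l[i] := by
  simp [List.getD_eq_getElem?_getD, List.getElem?_eq_getElem h]

lemma getD_false_iff (D : List Bool) (k : ℕ) (hk : k < D.length) :
    (D.getD k true = false) ↔ ¬(D.getD k false = true) := by
  rw [getD_eq_getElem D k hk, getD_eq_getElem D k hk]
  cases D[k] <;> simp

lemma rank_succ (m n : ℕ) (D : List Bool) (k : ℕ) (hk : k < D.length) :
    rank m n D (k+1) = rank m n D k + (if D.getD k false = true then (m:ℤ) else -(n:ℤ)) := by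
  have h1 : D.take (k+1) = D.take k ++ [D[k]] := by
    rw [List.take_succ, List.getElem?_eq_getElem hk]
    rfl
  rw [getD_eq_getElem D k hk]
  cases h : D[k] with
  | true =>
      have hn : nSteps D (k+1) = nSteps D k + 1 := by
        simp [nSteps, h1, h]
      have he : eSteps D (k+1) = eSteps D k := by
        simp [eSteps, h1, h]
      simp [rank, hn, he]
      push_cast
      ring
  | false =>
      have hn : nSteps D (k+1) = nSteps D k := by
        simp [nSteps, h1, h]
      have he : eSteps D (k+1) = eSteps D k + 1 := by
        simp [eSteps, h1, h]
      simp [rank, hn, he]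
      push_cast
      ring

lemma rank_final (m n : ℕ) (D : List Bool) (hP : IsPath m n D) : rank m n D (m+n) = 0 := by
  have hl : D.take (m+n) = D := by
    conv_lhs => rw [← hP.1]
    exact List.take_length
  have hn : nSteps D (m+n) = n := by simp [nSteps, hl, hP.2]
  have he : eSteps D (m+n) = m := by
    have := count_true_add_count_false D
    rw [hP.1, hP.2] at this
    simp [eSteps, hl]
    omega
  simp [rank, hn, he]
  ring

lemma rank_sub (m n : ℕ) (D : List Bool) (k : ℕ) (h : k ≤ D.length) :
    (m:ℤ) * k - rank m n D k = (m+n : ℤ) * eSteps D k := by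
  have h2 := nSteps_add_eSteps D k h
  rw [rank]
  have : (k : ℤ) = (nSteps D k : ℤ) + eSteps D k := by exact_mod_cast (h2.symm)
  rw [this]; ring

lemma idx_cases_le (m n : ℕ) (hco : Nat.Coprime m n) (a b : ℕ)
    (hab : a ≤ b) (hb : b ≤ m+n) (h : ((m:ℤ)+n) ∣ (m:ℤ)*a - (m:ℤ)*b) :
    a = b ∨ (a = 0 ∧ b = m+n) := by
  have hco2 : Nat.Coprime (m+n) m := by
    simpa using (Nat.coprime_add_self_left.mpr hco.symm)
  have h1 : ((m+n : ℕ) : ℤ) ∣ ((m * (b-a) : ℕ) : ℤ) := by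
    have h2 : ((m * (b-a) : ℕ) : ℤ) = -((m:ℤ)*a - (m:ℤ)*b) := by
      push_cast [Nat.cast_sub hab]
      ring
    rw [h2]
    exact (dvd_neg.mpr (by exact_mod_cast h))
  have hdvd : (m+n) ∣ m * (b-a) := by exact_mod_cast h1
  have h3 := hco2.dvd_of_dvd_mul_left hdvd
  rcases Nat.eq_zero_or_pos (b - a) with h4 | h4
  · left; omega
  · have := Nat.le_of_dvd h4 h3
    have h5 : b - a = m + n := by omega
    right; omega

lemma idx_cases (m n : ℕ) (hco : Nat.Coprime m n) (a b : ℕ)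
    (ha : a ≤ m+n) (hb : b ≤ m+n) (h : ((m:ℤ)+n) ∣ (m:ℤ)*a - (m:ℤ)*b) :
    a = b ∨ (a = 0 ∧ b = m+n) ∨ (b = 0 ∧ a = m+n) := by
  rcases le_total a b with hab | hab
  · rcases idx_cases_le m n hco a b hab hb h with h' | h'
    · exact Or.inl h'
    · exact Or.inr (Or.inl h')
  · rcases idx_cases_le m n hco b a hab ha (by
      have := dvd_neg.mpr h
      simpa [neg_sub] using this) with h' | h'
    · exact Or.inl h'.symm
    · exact Or.inr (Or.inr h')


lemma rank_cases (m n : ℕ) (D : List Bool) (hP : IsPath m n D) (hco : Nat.Coprime m n)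
    {a b : ℕ} (ha : a ≤ m+n) (hb : b ≤ m+n) (h : rank m n D a = rank m n D b) :
    a = b ∨ (a = 0 ∧ b = m+n) ∨ (b = 0 ∧ a = m+n) := by
  have hl := hP.1
  have h1 := rank_sub m n D a (by omega)
  have h2 := rank_sub m n D b (by omega)
  apply idx_cases m n hco a b ha hb
  refine ⟨(eSteps D a : ℤ) - eSteps D b, ?_⟩
  have h3 : (m:ℤ)*a - m*b = ((m:ℤ)*a - rank m n D a) - ((m:ℤ)*b - rank m n D b) := by
    rw [h]; ring
  rw [h3, h1, h2]; ring

lemma rank_inj_lt (m n : ℕ) (D : List Bool) (hP : IsPath m n D) (hco : Nat.Coprime m n)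
    {a b : ℕ} (ha : a < m+n) (hb : b < m+n) (h : rank m n D a = rank m n D b) : a = b := by
  rcases rank_cases m n D hP hco (by omega) (by omega) h with h' | h' | h' <;> omega

lemma rank_succ_inj (m n : ℕ) (D : List Bool) (hP : IsPath m n D) (hco : Nat.Coprime m n)
    {a b : ℕ} (ha : a < m+n) (hb : b < m+n)
    (h : rank m n D (a+1) = rank m n D (b+1)) : a = b := by
  rcases rank_cases m n D hP hco (by omega : a+1 ≤ m+n) (by omega : b+1 ≤ m+n) h
    with h' | h' | h' <;> omega

lemma mem_rankSet (m n : ℕ) (D : List Bool) {k : ℕ} (hk : k < m+n) :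
    rank m n D k ∈ rankSet m n D :=
  Finset.mem_image_of_mem _ (Finset.mem_range.mpr hk)

lemma card_rankSet (m n : ℕ) (D : List Bool) (hP : IsPath m n D) (hco : Nat.Coprime m n) :
    (rankSet m n D).card = m+n := by
  rw [rankSet, Finset.card_image_of_injOn, Finset.card_range]
  intro a ha b hb h
  exact rank_inj_lt m n D hP hco (Finset.mem_range.mp ha) (Finset.mem_range.mp hb) h

lemma succ_image (m n : ℕ) (D : List Bool) (hP : IsPath m n D) (hco : Nat.Coprime m n)
    (hmn : 0 < m+n) :
    (Finset.range (m+n)).image (fun k => rank m n D (k+1)) = rankSet m n D := by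
  apply Finset.eq_of_subset_of_card_le
  · intro x hx
    simp only [Finset.mem_image, Finset.mem_range] at hx ⊢
    obtain ⟨k, hk, rfl⟩ := hx
    by_cases h : k+1 < m+n
    · exact Finset.mem_image_of_mem _ (Finset.mem_range.mpr h)
    · have hk1 : k+1 = m+n := by omega
      have : rank m n D (k+1) = rank m n D 0 := by
        rw [hk1, rank_final m n D hP, rank_zero]
      rw [this]
      exact mem_rankSet m n D hmn
  · rw [card_rankSet m n D hP hco, Finset.card_image_of_injOn, Finset.card_range]
    intro a ha b hb h
    exact rank_succ_inj m n D hP hco (Finset.mem_range.mp ha) (Finset.mem_range.mp hb) h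


lemma step_iff_succ (m n : ℕ) (D : List Bool) (hP : IsPath m n D) (hco : Nat.Coprime m n)
    (hmn : 0 < m+n) {i : ℕ} (hi : i < m+n) :
    (D.getD i false = true) ↔ rank m n D (i+1) - m ∈ rankSet m n D := by
  have hlen : i < D.length := by rw [hP.1]; omega
  have hr := rank_succ m n D i hlen
  constructor
  · intro h
    rw [hr, if_pos h]
    have : rank m n D i + (m:ℤ) - m = rank m n D i := by ring
    rw [this]
    exact mem_rankSet m n D hi
  · intro h
    by_contra hfalse
    rw [hr, if_neg hfalse] at h
    simp only [rankSet, Finset.mem_image, Finset.mem_range] at h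
    obtain ⟨k, hk, hkeq⟩ := h
    -- rank k = rank i - n - m
    have h1 := rank_sub m n D k (by rw [hP.1]; omega)
    have h2 := rank_sub m n D i (by rw [hP.1]; omega)
    have hdvd : ((m:ℤ)+n) ∣ (m:ℤ)*k - (m:ℤ)*i := by
      refine ⟨(eSteps D k : ℤ) - eSteps D i - 1, ?_⟩
      have h3 : (m:ℤ)*k - m*i =
          ((m:ℤ)*k - rank m n D k) - ((m:ℤ)*i - rank m n D i) + (rank m n D k - rank m n D i) := by
        ring
      rw [h3, h1, h2, hkeq]
      ring
    rcases idx_cases m n hco k i (by omega) (by omega) hdvd with h' | h' | h'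
    · subst h'
      have : (0:ℤ) = -(n:ℤ) - m := by linarith [hkeq]
      have hm0 : (0:ℤ) < (m:ℤ) + n := by exact_mod_cast hmn
      omega
    · omega
    · omega

lemma step_iff_self (m n : ℕ) (D : List Bool) (hD : IsDyck m n D) (hco : Nat.Coprime m n)
    (hm : 0 < m) {i : ℕ} (hi : i < m+n) :
    (D.getD i false = true) ↔ rank m n D i + m ∈ rankSet m n D := by
  have hP := hD.1
  have hlen : i < D.length := by rw [hP.1]; omega
  have hr := rank_succ m n D i hlen
  have hnonneg : 0 ≤ rank m n D i := hD.2 i (by omega)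
  constructor
  · intro h
    rw [if_pos h] at hr
    by_cases h2 : i+1 < m+n
    · rw [← hr]; exact mem_rankSet m n D h2
    · have hi1 : i+1 = m+n := by omega
      have : rank m n D (i+1) = 0 := by rw [hi1]; exact rank_final m n D hP
      rw [this] at hr
      have hm0 : (0:ℤ) < (m:ℤ) := by exact_mod_cast hm
      omega
  · intro h
    simp only [rankSet, Finset.mem_image, Finset.mem_range] at h
    obtain ⟨k, hk, hkeq⟩ := h
    -- rank k = rank i + m
    have h1 := rank_sub m n D k (by rw [hP.1]; omega)
    have h2 := rank_sub m n D i (by rw [hP.1]; omega)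
    have hdvd : ((m:ℤ)+n) ∣ (m:ℤ)*k - (m:ℤ)*(i+1) := by
      refine ⟨(eSteps D k : ℤ) - eSteps D i, ?_⟩
      have h3 : (m:ℤ)*k - m*(i+1) =
          ((m:ℤ)*k - rank m n D k) - ((m:ℤ)*i - rank m n D i) + (rank m n D k - rank m n D i - m) := by
        push_cast; ring
      rw [h3, h1, h2, hkeq]
      ring
    rcases idx_cases m n hco k (i+1) (by omega) (by omega) hdvd with h' | h' | h'
    · -- k = i+1 : rank (i+1) = rank i + m forces step true
      subst h'
      by_contra hfalse
      rw [if_neg hfalse] at hr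
      rw [hr] at hkeq
      have hm0 : (0:ℤ) < (m:ℤ) := by exact_mod_cast hm
      have hn0 : (0:ℤ) ≤ (n:ℤ) := by exact_mod_cast Nat.zero_le n
      omega
    · -- k = 0, i+1 = m+n : rank i = -m < 0 contradiction
      obtain ⟨hk0, hi1⟩ := h'
      subst hk0
      rw [rank_zero] at hkeq
      have hm0 : (0:ℤ) < (m:ℤ) := by exact_mod_cast hm
      omega
    · omega


lemma southRanks_char (m n : ℕ) (D : List Bool) (hD : IsDyck m n D) (hco : Nat.Coprime m n)
    (hm : 0 < m) :
    southRanks m n D = (rankSet m n D).filter (fun x => x + (m:ℤ) ∈ rankSet m n D) := by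
  ext x
  simp only [southRanks, Finset.mem_image, Finset.mem_filter, Finset.mem_range]
  constructor
  · rintro ⟨i, ⟨hi, hstep⟩, rfl⟩
    exact ⟨mem_rankSet m n D hi, (step_iff_self m n D hD hco hm hi).mp hstep⟩
  · rintro ⟨hx, hxm⟩
    simp only [rankSet, Finset.mem_image, Finset.mem_range] at hx
    obtain ⟨i, hi, rfl⟩ := hx
    exact ⟨i, ⟨hi, (step_iff_self m n D hD hco hm hi).mpr hxm⟩, rfl⟩

lemma westRanks_char (m n : ℕ) (D : List Bool) (hD : IsDyck m n D) (hco : Nat.Coprime m n)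
    (hm : 0 < m) :
    westRanks m n D = (rankSet m n D).filter (fun x => x + (m:ℤ) ∉ rankSet m n D) := by
  have hlen := hD.1.1
  ext x
  simp only [westRanks, Finset.mem_image, Finset.mem_filter, Finset.mem_range]
  constructor
  · rintro ⟨i, ⟨hi, hstep⟩, rfl⟩
    refine ⟨mem_rankSet m n D hi, fun hmem => ?_⟩
    have := (step_iff_self m n D hD hco hm hi).mpr hmem
    rw [getD_false_iff D i (by omega)] at hstep
    exact hstep this
  · rintro ⟨hx, hxm⟩
    simp only [rankSet, Finset.mem_image, Finset.mem_range] at hx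
    obtain ⟨i, hi, rfl⟩ := hx
    refine ⟨i, ⟨hi, ?_⟩, rfl⟩
    rw [getD_false_iff D i (by omega)]
    intro hstep
    exact hxm ((step_iff_self m n D hD hco hm hi).mp hstep)

def XI (m n : ℕ) (D : List Bool) : ℕ :=
  ((Finset.range (m+n) ×ˢ Finset.range (m+n)).filter
    (fun p => D.getD p.1 false = true ∧ D.getD p.2 true = false ∧
      rank m n D p.1 < rank m n D p.2)).card

def YI (m n : ℕ) (D : List Bool) : ℕ :=
  ((Finset.range (m+n) ×ˢ Finset.range (m+n)).filter
    (fun p => D.getD p.1 false = true ∧ D.getD p.2 true = false ∧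
      rank m n D (p.2+1) < rank m n D (p.1+1))).card

lemma codinv_eq_XI (m n : ℕ) (D : List Bool) (hP : IsPath m n D) (hco : Nat.Coprime m n) :
    codinv m n D = XI m n D := by
  rw [codinv, XI]
  symm
  apply Finset.card_bij (fun p _ => ((rank m n D p.1, rank m n D p.2) : ℤ × ℤ))
  · rintro ⟨i, j⟩ hij
    simp only [Finset.mem_filter, Finset.mem_product, Finset.mem_range] at hij ⊢
    obtain ⟨⟨hi, hj⟩, hstepi, hstepj, hlt⟩ := hij
    refine ⟨⟨?_, ?_⟩, hlt⟩
    · exact Finset.mem_image_of_mem _ (Finset.mem_filter.mpr ⟨Finset.mem_range.mpr hi, hstepi⟩)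
    · exact Finset.mem_image_of_mem _ (Finset.mem_filter.mpr ⟨Finset.mem_range.mpr hj, hstepj⟩)
  · rintro ⟨i, j⟩ hij ⟨i', j'⟩ hij' heq
    simp only [Finset.mem_filter, Finset.mem_product, Finset.mem_range] at hij hij'
    simp only [Prod.mk.injEq] at heq
    have e1 := rank_inj_lt m n D hP hco hij.1.1 hij'.1.1 heq.1
    have e2 := rank_inj_lt m n D hP hco hij.1.2 hij'.1.2 heq.2
    simp [e1, e2]
  · rintro ⟨x, y⟩ hxy
    simp only [Finset.mem_filter, Finset.mem_product, southRanks, westRanks,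
      Finset.mem_image, Finset.mem_range] at hxy
    obtain ⟨⟨⟨i, ⟨hi, hsi⟩, rfl⟩, ⟨j, ⟨hj, hsj⟩, rfl⟩⟩, hlt⟩ := hxy
    refine ⟨⟨i, j⟩, ?_, rfl⟩
    simp only [Finset.mem_filter, Finset.mem_product, Finset.mem_range]
    exact ⟨⟨hi, hj⟩, hsi, hsj, hlt⟩

lemma codinv_complement (m n : ℕ) (D D' : List Bool) (hP : IsPath m n D)
    (hD' : IsDyck m n D') (hco : Nat.Coprime m n) (hm : 0 < m) (hmn : 0 < m+n)
    (M : ℤ) (hM : rankSet m n D' = (rankSet m n D).image (fun r => M - r)) :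
    codinv m n D' = YI m n D := by
  have hstep : ∀ {i : ℕ}, i < m+n →
      ((D.getD i false = true) ↔ rank m n D (i+1) - m ∈ rankSet m n D) :=
    fun {i} hi => step_iff_succ m n D hP hco hmn hi
  -- step (c) : rewrite codinv D' over rank sets
  have hc : codinv m n D' =
      ((rankSet m n D' ×ˢ rankSet m n D').filter
        (fun p => p.1 + (m:ℤ) ∈ rankSet m n D' ∧ p.2 + (m:ℤ) ∉ rankSet m n D' ∧
          p.1 < p.2)).card := by
    rw [codinv, southRanks_char m n D' hD' hco hm, westRanks_char m n D' hD' hco hm]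
    congr 1
    ext ⟨x, y⟩
    simp only [Finset.mem_filter, Finset.mem_product]
    tauto
  rw [hc, YI]
  symm
  -- step (d)+(e) : bijection (i,j) ↦ (M - rank (i+1), M - rank (j+1))
  have hmemR' : ∀ z : ℤ, z ∈ rankSet m n D → M - z ∈ rankSet m n D' := by
    intro z hz; rw [hM]; exact Finset.mem_image_of_mem _ hz
  have hmemR'' : ∀ w : ℤ, w ∈ rankSet m n D' → ∃ z ∈ rankSet m n D, M - z = w := by
    intro w hw; rw [hM] at hw; simpa using hw
  have hsuccmem : ∀ {k : ℕ}, k < m+n → rank m n D (k+1) ∈ rankSet m n D := by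
    intro k hk
    rw [← succ_image m n D hP hco hmn]
    exact Finset.mem_image_of_mem _ (Finset.mem_range.mpr hk)
  apply Finset.card_bij
    (fun p _ => ((M - rank m n D (p.1+1), M - rank m n D (p.2+1)) : ℤ × ℤ))
  · rintro ⟨i, j⟩ hij
    simp only [Finset.mem_filter, Finset.mem_product, Finset.mem_range] at hij ⊢
    obtain ⟨⟨hi, hj⟩, hstepi, hstepj, hlt⟩ := hij
    refine ⟨⟨hmemR' _ (hsuccmem hi), hmemR' _ (hsuccmem hj)⟩, ?_, ?_, by linarith⟩
    · have h1 : rank m n D (i+1) - m ∈ rankSet m n D := (hstep hi).mp hstepi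
      have := hmemR' _ h1
      have heq : M - (rank m n D (i+1) - m) = M - rank m n D (i+1) + m := by ring
      rwa [heq] at this
    · intro hmem
      obtain ⟨z, hz, hzeq⟩ := hmemR'' _ hmem
      have hz2 : z = rank m n D (j+1) - m := by linarith
      subst hz2
      have : D.getD j false = true := (hstep hj).mpr hz
      rw [getD_false_iff D j (by rw [hP.1]; omega)] at hstepj
      exact hstepj this
  · rintro ⟨i, j⟩ hij ⟨i', j'⟩ hij' heq
    simp only [Finset.mem_filter, Finset.mem_product, Finset.mem_range] at hij hij'
    simp only [Prod.mk.injEq] at heq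
    have e1 : rank m n D (i+1) = rank m n D (i'+1) := by linarith [heq.1]
    have e2 : rank m n D (j+1) = rank m n D (j'+1) := by linarith [heq.2]
    have := rank_succ_inj m n D hP hco hij.1.1 hij'.1.1 e1
    have := rank_succ_inj m n D hP hco hij.1.2 hij'.1.2 e2
    simp_all
  · rintro ⟨x, y⟩ hxy
    simp only [Finset.mem_filter, Finset.mem_product] at hxy
    obtain ⟨⟨hx, hy⟩, hxm, hym, hlt⟩ := hxy
    obtain ⟨zx, hzx, hzxe⟩ := hmemR'' _ hx
    obtain ⟨zy, hzy, hzye⟩ := hmemR'' _ hy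
    rw [← succ_image m n D hP hco hmn] at hzx hzy
    simp only [Finset.mem_image, Finset.mem_range] at hzx hzy
    obtain ⟨i, hi, rfl⟩ := hzx
    obtain ⟨j, hj, rfl⟩ := hzy
    refine ⟨⟨i, j⟩, ?_, by rw [hzxe, hzye]⟩
    simp only [Finset.mem_filter, Finset.mem_product, Finset.mem_range]
    refine ⟨⟨hi, hj⟩, ?_, ?_, ?_⟩
    · -- x + m ∈ R' gives rank (i+1) - m ∈ R
      rw [← hzxe] at hxm
      obtain ⟨w, hw, hwe⟩ := hmemR'' _ hxm
      have : w = rank m n D (i+1) - m := by linarith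
      subst this
      exact (hstep hi).mpr hw
    · -- ¬(y + m ∈ R') gives step false
      rw [getD_false_iff D j (by rw [hP.1]; omega)]
      intro hstepj
      apply hym
      rw [← hzye]
      have h1 := hmemR' _ ((hstep hj).mp hstepj)
      have heq : M - (rank m n D (j+1) - m) = M - rank m n D (j+1) + m := by ring
      rwa [heq] at h1
    · -- order
      rw [← hzxe, ← hzye] at hlt
      linarith

lemma crossing_aux (m n : ℕ) (D : List Bool) (hP : IsPath m n D) (ℓ : ℤ) :
    ∀ K, K ≤ m+n →
    (∑ i ∈ Finset.range K, (if D.getD i false = true ∧ ℓ - m < rank m n D i ∧ rank m n D i ≤ ℓ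
        then (1:ℤ) else 0))
    - (∑ j ∈ Finset.range K, (if D.getD j true = false ∧ ℓ < rank m n D j ∧ rank m n D j ≤ ℓ + n
        then (1:ℤ) else 0))
    = (if ℓ < rank m n D K then 1 else 0) - (if ℓ < 0 then (1:ℤ) else 0) := by
  intro K
  induction K with
  | zero => simp [rank_zero]
  | succ K ih =>
    intro hK
    have hK' : K ≤ m+n := by omega
    have hKlen : K < D.length := by rw [hP.1]; omega
    rw [Finset.sum_range_succ, Finset.sum_range_succ]
    have hr := rank_succ m n D K hKlen
    have h2 := ih hK'
    by_cases hs : D.getD K false = true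
    · have hs2 : ¬ (D.getD K true = false) := fun h => ((getD_false_iff D K hKlen).mp h) hs
      have hr' : rank m n D (K + 1) = rank m n D K + m := by
        rw [hr, if_pos hs]
      rw [hr']
      have e1 : (if D.getD K true = false ∧ ℓ < rank m n D K ∧ rank m n D K ≤ ℓ + n
          then (1:ℤ) else 0) = 0 := by
        apply if_neg; intro hcon; exact hs2 hcon.1
      have e2 : (if D.getD K false = true ∧ ℓ - m < rank m n D K ∧ rank m n D K ≤ ℓ
          then (1:ℤ) else 0) = (if ℓ - m < rank m n D K ∧ rank m n D K ≤ ℓ then (1:ℤ) else 0) := by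
        simp only [and_iff_right hs]
      rw [e1, e2]
      have hm0 : (0:ℤ) ≤ (m:ℤ) := by positivity
      split_ifs at h2 ⊢ <;> omega
    · have hs2 : D.getD K true = false := by
        rw [getD_false_iff D K hKlen]; exact hs
      have hr' : rank m n D (K + 1) = rank m n D K - n := by
        rw [hr, if_neg hs]; ring
      rw [hr']
      have e1 : (if D.getD K false = true ∧ ℓ - m < rank m n D K ∧ rank m n D K ≤ ℓ
          then (1:ℤ) else 0) = 0 := by
        apply if_neg; intro hcon; exact hs hcon.1
      have e2 : (if D.getD K true = false ∧ ℓ < rank m n D K ∧ rank m n D K ≤ ℓ + n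
          then (1:ℤ) else 0) = (if ℓ < rank m n D K ∧ rank m n D K ≤ ℓ + n then (1:ℤ) else 0) := by
        simp only [and_iff_right hs2]
      rw [e1, e2]
      have hn0 : (0:ℤ) ≤ (n:ℤ) := by positivity
      split_ifs at h2 ⊢ <;> omega
lemma crossing (m n : ℕ) (D : List Bool) (hP : IsPath m n D) (ℓ : ℤ) :
    (∑ i ∈ Finset.range (m+n),
      (if D.getD i false = true ∧ ℓ - m < rank m n D i ∧ rank m n D i ≤ ℓ then (1:ℤ) else 0))
    = (∑ j ∈ Finset.range (m+n),
      (if D.getD j true = false ∧ ℓ < rank m n D j ∧ rank m n D j ≤ ℓ + n then (1:ℤ) else 0)) := by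
  have h := crossing_aux m n D hP ℓ (m+n) le_rfl
  rw [rank_final m n D hP] at h
  have : (if ℓ < (0:ℤ) then (1:ℤ) else 0) - (if ℓ < 0 then (1:ℤ) else 0) = 0 := by ring
  omega

-- ### sum helpers

lemma sum_split2 (N p q : ℕ) (hp : p < N) (hq : q < N) (hpq : p ≠ q) (f : ℕ → ℤ) :
    ∑ i ∈ Finset.range N, f i = (∑ i ∈ Finset.range N \ {p, q}, f i) + f p + f q := by
  have h1 : ({p, q} : Finset ℕ) ⊆ Finset.range N := by
    intro x hx; simp only [Finset.mem_insert, Finset.mem_singleton] at hx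
    rcases hx with rfl | rfl <;> exact Finset.mem_range.mpr (by omega)
  rw [← Finset.sum_sdiff h1, Finset.sum_pair hpq]
  ring

lemma sum_cross (N p : ℕ) (hp : p+1 < N) (g : ℕ → ℕ → ℤ)
    (h0 : ∀ i < N, ∀ j < N, i ≠ p → i ≠ p+1 → j ≠ p → j ≠ p+1 → g i j = 0) :
    ∑ i ∈ Finset.range N, ∑ j ∈ Finset.range N, g i j
    = (∑ j ∈ Finset.range N \ {p, p+1}, (g p j + g (p+1) j))
      + ∑ i ∈ Finset.range N, (g i p + g i (p+1)) := by
  have hpN : p < N := by omega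
  have hne : p ≠ p+1 := by omega
  have step1 : ∀ i, ∑ j ∈ Finset.range N, g i j
      = (∑ j ∈ Finset.range N \ {p, p+1}, g i j) + (g i p + g i (p+1)) := by
    intro i
    rw [sum_split2 N p (p+1) hpN hp hne]
    ring
  calc ∑ i ∈ Finset.range N, ∑ j ∈ Finset.range N, g i j
      = ∑ i ∈ Finset.range N, ((∑ j ∈ Finset.range N \ {p, p+1}, g i j) + (g i p + g i (p+1))) := by
        exact Finset.sum_congr rfl (fun i _ => step1 i)
    _ = (∑ i ∈ Finset.range N, ∑ j ∈ Finset.range N \ {p, p+1}, g i j)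
        + ∑ i ∈ Finset.range N, (g i p + g i (p+1)) := by
        rw [Finset.sum_add_distrib]
    _ = (∑ j ∈ Finset.range N \ {p, p+1}, (g p j + g (p+1) j))
        + ∑ i ∈ Finset.range N, (g i p + g i (p+1)) := by
        congr 1
        rw [Finset.sum_comm]
        apply Finset.sum_congr rfl
        intro j hj
        simp only [Finset.mem_sdiff, Finset.mem_range, Finset.mem_insert,
          Finset.mem_singleton] at hj
        obtain ⟨hjN, hj2⟩ := hj
        rw [sum_split2 N p (p+1) hpN hp hne]
        have : ∑ i ∈ Finset.range N \ {p, p+1}, g i j = 0 := by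
          apply Finset.sum_eq_zero
          intro i hi
          simp only [Finset.mem_sdiff, Finset.mem_range, Finset.mem_insert,
            Finset.mem_singleton] at hi
          exact h0 i hi.1 j hjN (by tauto) (by tauto) (by tauto) (by tauto)
        rw [this]; ring

-- ### list surgery for the basic move

lemma move_count (A B : List Bool) (b : Bool) :
    (A ++ true :: false :: B).count b = (A ++ false :: true :: B).count b := by
  simp [List.count_append, List.count_cons]
  cases b <;> simp <;> ring

lemma move_length (A B : List Bool) :
    (A ++ true :: false :: B).length = (A ++ false :: true :: B).length := by
  simp

lemma move_isPath (m n : ℕ) (A B : List Bool) (hP : IsPath m n (A ++ false :: true :: B)) :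
    IsPath m n (A ++ true :: false :: B) := by
  constructor
  · rw [move_length]; exact hP.1
  · rw [move_count]; exact hP.2

lemma getD_append_left (l l' : List Bool) (i : ℕ) (h : i < l.length) (d : Bool) :
    (l ++ l').getD i d = l.getD i d := by
  simp [List.getD_eq_getElem?_getD, List.getElem?_append, h]

lemma getD_append_add (l l' : List Bool) (i : ℕ) (d : Bool) :
    (l ++ l').getD (l.length + i) d = l'.getD i d := by
  simp [List.getD_eq_getElem?_getD, List.getElem?_append_right, Nat.add_sub_cancel_left]

lemma move_getD (A B : List Bool) (x y x' y' : Bool) (k : ℕ) (d : Bool)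
    (hk1 : k ≠ A.length) (hk2 : k ≠ A.length+1) :
    (A ++ x :: y :: B).getD k d = (A ++ x' :: y' :: B).getD k d := by
  rcases lt_or_ge k A.length with h | h
  · rw [getD_append_left _ _ _ h, getD_append_left _ _ _ h]
  · obtain ⟨j, rfl⟩ : ∃ j, k = A.length + j := ⟨k - A.length, by omega⟩
    have hj : 2 ≤ j := by omega
    obtain ⟨j2, rfl⟩ : ∃ j2, j = j2 + 2 := ⟨j - 2, by omega⟩
    rw [getD_append_add, getD_append_add]
    rfl

lemma getD_move_p (A B : List Bool) (x y : Bool) (d : Bool) :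
    (A ++ x :: y :: B).getD A.length d = x := by
  have := getD_append_add A (x :: y :: B) 0 d
  simpa using this

lemma getD_move_p1 (A B : List Bool) (x y : Bool) (d : Bool) :
    (A ++ x :: y :: B).getD (A.length + 1) d = y := by
  have := getD_append_add A (x :: y :: B) 1 d
  simpa using this

lemma move_take_count (A B : List Bool) (k : ℕ) (hk : k ≠ A.length + 1) (b : Bool) :
    ((A ++ true :: false :: B).take k).count b = ((A ++ false :: true :: B).take k).count b := by
  rw [List.take_append, List.take_append]
  simp only [List.count_append]
  congr 1
  have hj1 : k - A.length ≠ 1 := by omega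
  generalize k - A.length = j at hj1
  cases j with
  | zero => simp
  | succ j1 =>
    cases j1 with
    | zero => omega
    | succ j2 =>
      simp only [List.take_succ_cons, List.count_cons]
      cases b <;> simp <;> ring

lemma move_rank (m n : ℕ) (A B : List Bool) (k : ℕ) (hk : k ≠ A.length + 1) :
    rank m n (A ++ true :: false :: B) k = rank m n (A ++ false :: true :: B) k := by
  unfold rank nSteps eSteps
  rw [move_take_count A B k hk true, move_take_count A B k hk false]

lemma XI_int (m n : ℕ) (D : List Bool) (hP : IsPath m n D) :
    (XI m n D : ℤ) = ∑ i ∈ Finset.range (m+n), ∑ j ∈ Finset.range (m+n),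
      (if D.getD i false = true ∧ ¬(D.getD j false = true) ∧ rank m n D i < rank m n D j
        then (1:ℤ) else 0) := by
  rw [XI, Finset.card_filter]
  rw [← Finset.sum_product']
  push_cast
  apply Finset.sum_congr rfl
  intro q hq
  have hjlen : q.2 < D.length := by
    rw [hP.1]
    exact Finset.mem_range.mp (Finset.mem_product.mp hq).2
  have hiff := getD_false_iff D q.2 hjlen
  rw [if_congr (and_congr_right (fun _ => and_congr_left (fun _ => hiff))) rfl rfl]

lemma YI_int (m n : ℕ) (D : List Bool) (hP : IsPath m n D) :
    (YI m n D : ℤ) = ∑ i ∈ Finset.range (m+n), ∑ j ∈ Finset.range (m+n),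
      (if D.getD i false = true ∧ ¬(D.getD j false = true) ∧
          rank m n D (j+1) < rank m n D (i+1)
        then (1:ℤ) else 0) := by
  rw [YI, Finset.card_filter]
  rw [← Finset.sum_product']
  push_cast
  apply Finset.sum_congr rfl
  intro q hq
  have hjlen : q.2 < D.length := by
    rw [hP.1]
    exact Finset.mem_range.mp (Finset.mem_product.mp hq).2
  have hiff := getD_false_iff D q.2 hjlen
  rw [if_congr (and_congr_right (fun _ => and_congr_left (fun _ => hiff))) rfl rfl]

def cntT (m n : ℕ) (D : List Bool) (ℓ : ℤ) : ℤ :=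
  ∑ i ∈ Finset.range (m+n),
    if D.getD i false = true ∧ ℓ - m < rank m n D i ∧ rank m n D i ≤ ℓ then 1 else 0

def cntF (m n : ℕ) (D : List Bool) (ℓ : ℤ) : ℤ :=
  ∑ j ∈ Finset.range (m+n),
    if ¬(D.getD j false = true) ∧ ℓ < rank m n D j ∧ rank m n D j ≤ ℓ + n then 1 else 0

lemma crossing_not (m n : ℕ) (D : List Bool) (hP : IsPath m n D) (ℓ : ℤ) :
    cntT m n D ℓ = cntF m n D ℓ := by
  rw [cntT, cntF, crossing m n D hP ℓ]
  apply Finset.sum_congr rfl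
  intro j hj
  have hjlen : j < D.length := by rw [hP.1]; exact Finset.mem_range.mp hj
  have hiff := getD_false_iff D j hjlen
  rw [if_congr (and_congr_left (fun _ => hiff)) rfl rfl]
section MoveX
variable (m n : ℕ) (A B : List Bool)

lemma move_X (hm : 0 < m) (hn : 0 < n) (hP : IsPath m n (A ++ false :: true :: B)) :
    (XI m n (A ++ true :: false :: B) : ℤ) - XI m n (A ++ false :: true :: B)
      = 1 - cntF m n (A ++ false :: true :: B) (rank m n (A ++ false :: true :: B) A.length - n)
          + cntT m n (A ++ false :: true :: B) (rank m n (A ++ false :: true :: B) A.length + m - 1) := by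
  set D : List Bool := A ++ false :: true :: B with hD
  set D2 : List Bool := A ++ true :: false :: B with hD2
  set p := A.length with hp
  set N := m + n with hN
  have hP2 : IsPath m n D2 := move_isPath m n A B hP
  have hlen : D.length = N := hP.1
  have hlen2 : D2.length = N := hP2.1
  have hpN : p + 1 < N := by
    have h2 : D.length = p + (B.length + 2) := by
      rw [hD, hp, List.length_append, List.length_cons, List.length_cons]
    omega
  set r := rank m n D p with hr
  have dDp : D.getD p false = false := getD_move_p A B false true false
  have dDp1 : D.getD (p+1) false = true := getD_move_p1 A B false true false
  have dD2p : D2.getD p false = true := getD_move_p A B true false false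
  have dD2p1 : D2.getD (p+1) false = false := getD_move_p1 A B true false false
  have gsame : ∀ k, k ≠ p → k ≠ p+1 → D2.getD k false = D.getD k false :=
    fun k h1 h2 => move_getD A B true false false true k false h1 h2
  have rsame : ∀ k, k ≠ p+1 → rank m n D2 k = rank m n D k :=
    fun k h => move_rank m n A B k h
  have rp : rank m n D2 p = r := rsame p (by omega)
  have rDp1 : rank m n D (p+1) = r - n := by
    have h := rank_succ m n D p (by omega)
    rw [h]
    simp only [dDp, Bool.false_eq_true, if_false]
    ring
  have rD2p1 : rank m n D2 (p+1) = r + m := by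
    have h := rank_succ m n D2 p (by omega)
    rw [h, rp, if_pos dD2p]
  have hmz : (0:ℤ) < m := by exact_mod_cast hm
  have hnz : (0:ℤ) < n := by exact_mod_cast hn
  -- difference as a double sum
  have hXd : (XI m n D2 : ℤ) - XI m n D
      = ∑ i ∈ Finset.range N, ∑ j ∈ Finset.range N,
          ((if D2.getD i false = true ∧ ¬(D2.getD j false = true) ∧
              rank m n D2 i < rank m n D2 j then (1:ℤ) else 0)
          - (if D.getD i false = true ∧ ¬(D.getD j false = true) ∧
              rank m n D i < rank m n D j then (1:ℤ) else 0)) := by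
    rw [XI_int m n D2 hP2, XI_int m n D hP, ← Finset.sum_sub_distrib]
    exact Finset.sum_congr rfl (fun i _ => (Finset.sum_sub_distrib _ _).symm)
  rw [hXd]
  rw [sum_cross N p hpN _ (by
    intro i hiN j hjN hi1 hi2 hj1 hj2
    have e1 := gsame i hi1 hi2
    have e2 := gsame j hj1 hj2
    have e3 := rsame i (by omega)
    have e4 := rsame j (by omega)
    simp only [e1, e2, e3, e4, sub_self])]
  -- piece 1 : rows p and p+1
  have piece1 : (∑ j ∈ Finset.range N \ {p, p+1},
      (((if D2.getD p false = true ∧ ¬(D2.getD j false = true) ∧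
            rank m n D2 p < rank m n D2 j then (1:ℤ) else 0)
        - (if D.getD p false = true ∧ ¬(D.getD j false = true) ∧
            rank m n D p < rank m n D j then (1:ℤ) else 0))
      + ((if D2.getD (p+1) false = true ∧ ¬(D2.getD j false = true) ∧
            rank m n D2 (p+1) < rank m n D2 j then (1:ℤ) else 0)
        - (if D.getD (p+1) false = true ∧ ¬(D.getD j false = true) ∧
            rank m n D (p+1) < rank m n D j then (1:ℤ) else 0))))
      = ∑ j ∈ Finset.range N \ {p, p+1},
          -(if ¬(D.getD j false = true) ∧ (r - n) < rank m n D j ∧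
              rank m n D j ≤ (r - n) + n then (1:ℤ) else 0) := by
    apply Finset.sum_congr rfl
    intro j hj
    simp only [Finset.mem_sdiff, Finset.mem_range, Finset.mem_insert, Finset.mem_singleton] at hj
    have hj1 : j ≠ p := by tauto
    have hj2 : j ≠ p+1 := by tauto
    have e2 := gsame j hj1 hj2
    have e4 := rsame j (by omega)
    rw [e2, e4, rp, rDp1, dD2p, dDp, dDp1, dD2p1]
    by_cases hb : D.getD j false = true
    · simp only [hb, eq_self_iff_true, not_true, false_and, and_false, if_false,
        Bool.false_eq_true, true_and]
      ring
    · simp only [hb, not_false_iff, true_and, eq_self_iff_true, Bool.false_eq_true,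
        false_and, if_false]
      split_ifs <;> omega
  rw [piece1]
  -- piece 2 : columns p and p+1
  have piece2 : (∑ i ∈ Finset.range N,
      (((if D2.getD i false = true ∧ ¬(D2.getD p false = true) ∧
            rank m n D2 i < rank m n D2 p then (1:ℤ) else 0)
        - (if D.getD i false = true ∧ ¬(D.getD p false = true) ∧
            rank m n D i < rank m n D p then (1:ℤ) else 0))
      + ((if D2.getD i false = true ∧ ¬(D2.getD (p+1) false = true) ∧
            rank m n D2 i < rank m n D2 (p+1) then (1:ℤ) else 0)
        - (if D.getD i false = true ∧ ¬(D.getD (p+1) false = true) ∧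
            rank m n D i < rank m n D (p+1) then (1:ℤ) else 0))))
      = ∑ i ∈ Finset.range N \ {p, p+1},
          (if D.getD i false = true ∧ (r + m - 1) - m < rank m n D i ∧
              rank m n D i ≤ r + m - 1 then (1:ℤ) else 0) := by
    rw [sum_split2 N p (p+1) (by omega) hpN (by omega)]
    have corner1 : (((if D2.getD p false = true ∧ ¬(D2.getD p false = true) ∧
            rank m n D2 p < rank m n D2 p then (1:ℤ) else 0)
        - (if D.getD p false = true ∧ ¬(D.getD p false = true) ∧
            rank m n D p < rank m n D p then (1:ℤ) else 0))
      + ((if D2.getD p false = true ∧ ¬(D2.getD (p+1) false = true) ∧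
            rank m n D2 p < rank m n D2 (p+1) then (1:ℤ) else 0)
        - (if D.getD p false = true ∧ ¬(D.getD (p+1) false = true) ∧
            rank m n D p < rank m n D (p+1) then (1:ℤ) else 0))) = 1 := by
      rw [rp, rD2p1, dD2p, dDp, dDp1, dD2p1]
      simp only [eq_self_iff_true, not_true, false_and, and_false, if_false,
        Bool.false_eq_true, true_and, not_false_iff]
      split_ifs <;> omega
    have corner2 : (((if D2.getD (p+1) false = true ∧ ¬(D2.getD p false = true) ∧
            rank m n D2 (p+1) < rank m n D2 p then (1:ℤ) else 0)
        - (if D.getD (p+1) false = true ∧ ¬(D.getD p false = true) ∧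
            rank m n D (p+1) < rank m n D p then (1:ℤ) else 0))
      + ((if D2.getD (p+1) false = true ∧ ¬(D2.getD (p+1) false = true) ∧
            rank m n D2 (p+1) < rank m n D2 (p+1) then (1:ℤ) else 0)
        - (if D.getD (p+1) false = true ∧ ¬(D.getD (p+1) false = true) ∧
            rank m n D (p+1) < rank m n D (p+1) then (1:ℤ) else 0))) = -1 := by
      rw [rp, rD2p1, rDp1, dD2p, dDp, dDp1, dD2p1]
      simp only [eq_self_iff_true, not_true, false_and, and_false, if_false,
        Bool.false_eq_true, true_and, not_false_iff]
      split_ifs <;> omega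
    rw [corner1, corner2]
    have hmain : ∀ j ∈ Finset.range N \ {p, p+1},
        (((if D2.getD j false = true ∧ ¬(D2.getD p false = true) ∧
            rank m n D2 j < rank m n D2 p then (1:ℤ) else 0)
        - (if D.getD j false = true ∧ ¬(D.getD p false = true) ∧
            rank m n D j < rank m n D p then (1:ℤ) else 0))
      + ((if D2.getD j false = true ∧ ¬(D2.getD (p+1) false = true) ∧
            rank m n D2 j < rank m n D2 (p+1) then (1:ℤ) else 0)
        - (if D.getD j false = true ∧ ¬(D.getD (p+1) false = true) ∧
            rank m n D j < rank m n D (p+1) then (1:ℤ) else 0)))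
        = (if D.getD j false = true ∧ (r + m - 1) - m < rank m n D j ∧
              rank m n D j ≤ r + m - 1 then (1:ℤ) else 0) := by
      intro j hj
      simp only [Finset.mem_sdiff, Finset.mem_range, Finset.mem_insert, Finset.mem_singleton] at hj
      have hj1 : j ≠ p := by tauto
      have hj2 : j ≠ p+1 := by tauto
      have e2 := gsame j hj1 hj2
      have e4 := rsame j (by omega)
      rw [e2, e4, rp, rD2p1, rDp1, dD2p, dDp, dDp1, dD2p1]
      by_cases hb : D.getD j false = true
      · simp only [hb, eq_self_iff_true, not_true, false_and, and_false, if_false,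
          Bool.false_eq_true, true_and, not_false_iff]
        split_ifs <;> omega
      · simp only [hb, Bool.false_eq_true, false_and, if_false]
        ring
    rw [Finset.sum_congr rfl hmain]
    ring
  rw [piece2]
  -- assemble
  have ext1 : ∑ j ∈ Finset.range N \ {p, p+1},
      -(if ¬(D.getD j false = true) ∧ (r - n) < rank m n D j ∧
          rank m n D j ≤ (r - n) + n then (1:ℤ) else 0)
      = 1 - cntF m n D (r - n) := by
    have := sum_split2 N p (p+1) (by omega) hpN (by omega)
      (fun j => (if ¬(D.getD j false = true) ∧ (r - n) < rank m n D j ∧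
          rank m n D j ≤ (r - n) + n then (1:ℤ) else 0))
    rw [Finset.sum_neg_distrib]
    have hvp : (if ¬(D.getD p false = true) ∧ (r - n) < rank m n D p ∧
        rank m n D p ≤ (r - n) + n then (1:ℤ) else 0) = 1 := by
      rw [dDp]
      simp only [Bool.false_eq_true, not_false_iff, true_and]
      rw [if_pos]
      constructor <;> omega
    have hvp1 : (if ¬(D.getD (p+1) false = true) ∧ (r - n) < rank m n D (p+1) ∧
        rank m n D (p+1) ≤ (r - n) + n then (1:ℤ) else 0) = 0 := by
      rw [dDp1]
      simp only [eq_self_iff_true, not_true, false_and, if_false]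
    rw [cntF, ← hN]
    omega
  have ext2 : ∑ i ∈ Finset.range N \ {p, p+1},
      (if D.getD i false = true ∧ (r + m - 1) - m < rank m n D i ∧
          rank m n D i ≤ r + m - 1 then (1:ℤ) else 0)
      = cntT m n D (r + m - 1) := by
    have hsp := sum_split2 N p (p+1) (by omega) hpN (by omega)
      (fun i => (if D.getD i false = true ∧ (r + m - 1) - m < rank m n D i ∧
          rank m n D i ≤ r + m - 1 then (1:ℤ) else 0))
    have hvp : (if D.getD p false = true ∧ (r + m - 1) - m < rank m n D p ∧
        rank m n D p ≤ r + m - 1 then (1:ℤ) else 0) = 0 := by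
      rw [dDp]
      simp only [Bool.false_eq_true, false_and, if_false]
    have hvp1 : (if D.getD (p+1) false = true ∧ (r + m - 1) - m < rank m n D (p+1) ∧
        rank m n D (p+1) ≤ r + m - 1 then (1:ℤ) else 0) = 0 := by
      rw [dDp1, rDp1]
      rw [if_neg]
      intro hc
      omega
    rw [cntT, ← hN]
    omega
  linarith [ext1, ext2]

end MoveX

section MoveY
variable (m n : ℕ) (A B : List Bool)

lemma move_Y (hm : 0 < m) (hn : 0 < n) (hP : IsPath m n (A ++ false :: true :: B)) :
    (YI m n (A ++ true :: false :: B) : ℤ) - YI m n (A ++ false :: true :: B)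
      = 1 + cntF m n (A ++ false :: true :: B) (rank m n (A ++ false :: true :: B) A.length + m - 1)
          - cntT m n (A ++ false :: true :: B) (rank m n (A ++ false :: true :: B) A.length - n) := by
  set D : List Bool := A ++ false :: true :: B with hD
  set D2 : List Bool := A ++ true :: false :: B with hD2
  set p := A.length with hp
  set N := m + n with hN
  have hP2 : IsPath m n D2 := move_isPath m n A B hP
  have hlen : D.length = N := hP.1
  have hlen2 : D2.length = N := hP2.1
  have hpN : p + 1 < N := by
    have h2 : D.length = p + (B.length + 2) := by
      rw [hD, hp, List.length_append, List.length_cons, List.length_cons]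
    omega
  set r := rank m n D p with hr
  have dDp : D.getD p false = false := getD_move_p A B false true false
  have dDp1 : D.getD (p+1) false = true := getD_move_p1 A B false true false
  have dD2p : D2.getD p false = true := getD_move_p A B true false false
  have dD2p1 : D2.getD (p+1) false = false := getD_move_p1 A B true false false
  have gsame : ∀ k, k ≠ p → k ≠ p+1 → D2.getD k false = D.getD k false :=
    fun k h1 h2 => move_getD A B true false false true k false h1 h2
  have rsame : ∀ k, k ≠ p+1 → rank m n D2 k = rank m n D k :=
    fun k h => move_rank m n A B k h
  have rp : rank m n D2 p = r := rsame p (by omega)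
  have rDp1 : rank m n D (p+1) = r - n := by
    have h := rank_succ m n D p (by omega)
    rw [h]
    simp only [dDp, Bool.false_eq_true, if_false]
    ring
  have rD2p1 : rank m n D2 (p+1) = r + m := by
    have h := rank_succ m n D2 p (by omega)
    rw [h, rp, if_pos dD2p]
  have rDp2 : rank m n D (p+2) = r - n + m := by
    have h := rank_succ m n D (p+1) (by omega)
    rw [h, rDp1, if_pos dDp1]
  have rD2p2 : rank m n D2 (p+2) = r - n + m := by
    have : rank m n D2 (p+2) = rank m n D (p+2) := rsame (p+2) (by omega)
    rw [this, rDp2]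
  have hmz : (0:ℤ) < m := by exact_mod_cast hm
  have hnz : (0:ℤ) < n := by exact_mod_cast hn
  have hYd : (YI m n D2 : ℤ) - YI m n D
      = ∑ i ∈ Finset.range N, ∑ j ∈ Finset.range N,
          ((if D2.getD i false = true ∧ ¬(D2.getD j false = true) ∧
              rank m n D2 (j+1) < rank m n D2 (i+1) then (1:ℤ) else 0)
          - (if D.getD i false = true ∧ ¬(D.getD j false = true) ∧
              rank m n D (j+1) < rank m n D (i+1) then (1:ℤ) else 0)) := by
    rw [YI_int m n D2 hP2, YI_int m n D hP, ← Finset.sum_sub_distrib]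
    exact Finset.sum_congr rfl (fun i _ => (Finset.sum_sub_distrib _ _).symm)
  rw [hYd]
  rw [sum_cross N p hpN _ (by
    intro i hiN j hjN hi1 hi2 hj1 hj2
    have e1 := gsame i hi1 hi2
    have e2 := gsame j hj1 hj2
    have e3 := rsame (i+1) (by omega)
    have e4 := rsame (j+1) (by omega)
    simp only [e1, e2, e3, e4, sub_self])]
  -- piece 1 : rows p and p+1
  have piece1 : (∑ j ∈ Finset.range N \ {p, p+1},
      (((if D2.getD p false = true ∧ ¬(D2.getD j false = true) ∧
            rank m n D2 (j+1) < rank m n D2 (p+1) then (1:ℤ) else 0)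
        - (if D.getD p false = true ∧ ¬(D.getD j false = true) ∧
            rank m n D (j+1) < rank m n D (p+1) then (1:ℤ) else 0))
      + ((if D2.getD (p+1) false = true ∧ ¬(D2.getD j false = true) ∧
            rank m n D2 (j+1) < rank m n D2 (p+1+1) then (1:ℤ) else 0)
        - (if D.getD (p+1) false = true ∧ ¬(D.getD j false = true) ∧
            rank m n D (j+1) < rank m n D (p+1+1) then (1:ℤ) else 0))))
      = ∑ j ∈ Finset.range N \ {p, p+1},
          (if ¬(D.getD j false = true) ∧ (r + m - 1) < rank m n D j ∧
              rank m n D j ≤ (r + m - 1) + n then (1:ℤ) else 0) := by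
    apply Finset.sum_congr rfl
    intro j hj
    simp only [Finset.mem_sdiff, Finset.mem_range, Finset.mem_insert, Finset.mem_singleton] at hj
    have hj1 : j ≠ p := by tauto
    have hj2 : j ≠ p+1 := by tauto
    have e2 := gsame j hj1 hj2
    have e4 := rsame (j+1) (by omega)
    have hq : p + 1 + 1 = p + 2 := by omega
    rw [e2, e4, rD2p1, dD2p, dDp, dDp1, dD2p1, hq, rDp2]
    by_cases hb : D.getD j false = true
    · simp only [hb, eq_self_iff_true, not_true, false_and, and_false, if_false,
        Bool.false_eq_true, true_and]
      ring
    · have hsucc : rank m n D (j+1) = rank m n D j - n := by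
        have h := rank_succ m n D j (by omega)
        rw [h, if_neg hb]
        ring
      rw [hsucc]
      simp only [hb, not_false_iff, true_and, eq_self_iff_true, Bool.false_eq_true,
        false_and, if_false]
      split_ifs <;> omega
  rw [piece1]
  -- piece 2 : columns p and p+1
  have piece2 : (∑ i ∈ Finset.range N,
      (((if D2.getD i false = true ∧ ¬(D2.getD p false = true) ∧
            rank m n D2 (p+1) < rank m n D2 (i+1) then (1:ℤ) else 0)
        - (if D.getD i false = true ∧ ¬(D.getD p false = true) ∧
            rank m n D (p+1) < rank m n D (i+1) then (1:ℤ) else 0))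
      + ((if D2.getD i false = true ∧ ¬(D2.getD (p+1) false = true) ∧
            rank m n D2 (p+1+1) < rank m n D2 (i+1) then (1:ℤ) else 0)
        - (if D.getD i false = true ∧ ¬(D.getD (p+1) false = true) ∧
            rank m n D (p+1+1) < rank m n D (i+1) then (1:ℤ) else 0))))
      = ∑ i ∈ Finset.range N \ {p, p+1},
          -(if D.getD i false = true ∧ (r - n) - m < rank m n D i ∧
              rank m n D i ≤ r - n then (1:ℤ) else 0) := by
    rw [sum_split2 N p (p+1) (by omega) hpN (by omega)]
    have hq : p + 1 + 1 = p + 2 := by omega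
    have corner1 : (((if D2.getD p false = true ∧ ¬(D2.getD p false = true) ∧
            rank m n D2 (p+1) < rank m n D2 (p+1) then (1:ℤ) else 0)
        - (if D.getD p false = true ∧ ¬(D.getD p false = true) ∧
            rank m n D (p+1) < rank m n D (p+1) then (1:ℤ) else 0))
      + ((if D2.getD p false = true ∧ ¬(D2.getD (p+1) false = true) ∧
            rank m n D2 (p+1+1) < rank m n D2 (p+1) then (1:ℤ) else 0)
        - (if D.getD p false = true ∧ ¬(D.getD (p+1) false = true) ∧
            rank m n D (p+1+1) < rank m n D (p+1) then (1:ℤ) else 0))) = 1 := by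
      rw [hq, rD2p1, rD2p2, dD2p, dDp, dDp1, dD2p1]
      simp only [eq_self_iff_true, not_true, false_and, and_false, if_false,
        Bool.false_eq_true, true_and, not_false_iff]
      split_ifs <;> omega
    have corner2 : (((if D2.getD (p+1) false = true ∧ ¬(D2.getD p false = true) ∧
            rank m n D2 (p+1) < rank m n D2 (p+1+1) then (1:ℤ) else 0)
        - (if D.getD (p+1) false = true ∧ ¬(D.getD p false = true) ∧
            rank m n D (p+1) < rank m n D (p+1+1) then (1:ℤ) else 0))
      + ((if D2.getD (p+1) false = true ∧ ¬(D2.getD (p+1) false = true) ∧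
            rank m n D2 (p+1+1) < rank m n D2 (p+1+1) then (1:ℤ) else 0)
        - (if D.getD (p+1) false = true ∧ ¬(D.getD (p+1) false = true) ∧
            rank m n D (p+1+1) < rank m n D (p+1+1) then (1:ℤ) else 0))) = -1 := by
      rw [hq, rDp1, rDp2, dD2p, dDp, dDp1, dD2p1]
      simp only [eq_self_iff_true, not_true, false_and, and_false, if_false,
        Bool.false_eq_true, true_and, not_false_iff]
      split_ifs <;> omega
    rw [corner1, corner2]
    have hmain : ∀ i ∈ Finset.range N \ {p, p+1},
        (((if D2.getD i false = true ∧ ¬(D2.getD p false = true) ∧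
            rank m n D2 (p+1) < rank m n D2 (i+1) then (1:ℤ) else 0)
        - (if D.getD i false = true ∧ ¬(D.getD p false = true) ∧
            rank m n D (p+1) < rank m n D (i+1) then (1:ℤ) else 0))
      + ((if D2.getD i false = true ∧ ¬(D2.getD (p+1) false = true) ∧
            rank m n D2 (p+1+1) < rank m n D2 (i+1) then (1:ℤ) else 0)
        - (if D.getD i false = true ∧ ¬(D.getD (p+1) false = true) ∧
            rank m n D (p+1+1) < rank m n D (i+1) then (1:ℤ) else 0)))
        = -(if D.getD i false = true ∧ (r - n) - m < rank m n D i ∧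
              rank m n D i ≤ r - n then (1:ℤ) else 0) := by
      intro i hi
      simp only [Finset.mem_sdiff, Finset.mem_range, Finset.mem_insert, Finset.mem_singleton] at hi
      have hi1 : i ≠ p := by tauto
      have hi2 : i ≠ p+1 := by tauto
      have e1 := gsame i hi1 hi2
      have e3 := rsame (i+1) (by omega)
      rw [hq, e1, e3, rD2p2, rDp1, rDp2, dD2p, dDp, dDp1, dD2p1]
      by_cases hb : D.getD i false = true
      · have hsucc : rank m n D (i+1) = rank m n D i + m := by
          have h := rank_succ m n D i (by omega)
          rw [h, if_pos hb]
        rw [hsucc]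
        simp only [hb, eq_self_iff_true, not_true, false_and, and_false, if_false,
          Bool.false_eq_true, true_and, not_false_iff]
        split_ifs <;> omega
      · simp only [hb, Bool.false_eq_true, false_and, if_false]
        ring
    rw [Finset.sum_congr rfl hmain]
    ring
  rw [piece2]
  -- assemble
  have ext1 : ∑ j ∈ Finset.range N \ {p, p+1},
      (if ¬(D.getD j false = true) ∧ (r + m - 1) < rank m n D j ∧
          rank m n D j ≤ (r + m - 1) + n then (1:ℤ) else 0)
      = cntF m n D (r + m - 1) := by
    have hsp := sum_split2 N p (p+1) (by omega) hpN (by omega)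
      (fun j => (if ¬(D.getD j false = true) ∧ (r + m - 1) < rank m n D j ∧
          rank m n D j ≤ (r + m - 1) + n then (1:ℤ) else 0))
    have hvp : (if ¬(D.getD p false = true) ∧ (r + m - 1) < rank m n D p ∧
        rank m n D p ≤ (r + m - 1) + n then (1:ℤ) else 0) = 0 := by
      rw [if_neg]
      intro hc
      have := hc.2.1
      omega
    have hvp1 : (if ¬(D.getD (p+1) false = true) ∧ (r + m - 1) < rank m n D (p+1) ∧
        rank m n D (p+1) ≤ (r + m - 1) + n then (1:ℤ) else 0) = 0 := by
      rw [dDp1]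
      simp only [eq_self_iff_true, not_true, false_and, if_false]
    rw [cntF, ← hN]
    omega
  have ext2 : ∑ i ∈ Finset.range N \ {p, p+1},
      -(if D.getD i false = true ∧ (r - n) - m < rank m n D i ∧
          rank m n D i ≤ r - n then (1:ℤ) else 0)
      = 1 - cntT m n D (r - n) := by
    have hsp := sum_split2 N p (p+1) (by omega) hpN (by omega)
      (fun i => (if D.getD i false = true ∧ (r - n) - m < rank m n D i ∧
          rank m n D i ≤ r - n then (1:ℤ) else 0))
    rw [Finset.sum_neg_distrib]
    have hvp : (if D.getD p false = true ∧ (r - n) - m < rank m n D p ∧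
        rank m n D p ≤ r - n then (1:ℤ) else 0) = 0 := by
      rw [dDp]
      simp only [Bool.false_eq_true, false_and, if_false]
    have hvp1 : (if D.getD (p+1) false = true ∧ (r - n) - m < rank m n D (p+1) ∧
        rank m n D (p+1) ≤ r - n then (1:ℤ) else 0) = 1 := by
      rw [dDp1, rDp1]
      simp only [eq_self_iff_true, true_and]
      rw [if_pos]
      constructor <;> omega
    rw [cntT, ← hN]
    omega
  linarith [ext1, ext2]

end MoveY

lemma move_key (m n : ℕ) (hm : 0 < m) (hn : 0 < n) (A B : List Bool)
    (hP : IsPath m n (A ++ false :: true :: B)) :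
    (XI m n (A ++ true :: false :: B) : ℤ) - YI m n (A ++ true :: false :: B)
      = (XI m n (A ++ false :: true :: B) : ℤ) - YI m n (A ++ false :: true :: B) := by
  have hX := move_X m n A B hm hn hP
  have hY := move_Y m n A B hm hn hP
  have hc1 := crossing_not m n (A ++ false :: true :: B) hP
    (rank m n (A ++ false :: true :: B) A.length - n)
  have hc2 := crossing_not m n (A ++ false :: true :: B) hP
    (rank m n (A ++ false :: true :: B) A.length + m - 1)
  linarith

lemma decomp (D : List Bool) :
    (∃ A B, D = A ++ false :: true :: B) ∨
      D = List.replicate (D.count true) true ++ List.replicate (D.count false) false := by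
  induction D with
  | nil => right; simp
  | cons a t ih =>
    rcases ih with ⟨A, B, rfl⟩ | h
    · left; exact ⟨a :: A, B, rfl⟩
    · cases a
      · by_cases hct : t.count true = 0
        · right
          have hcc : (false :: t).count true = 0 := by
            simp [List.count_cons, hct]
          have hcf : (false :: t).count false = t.count false + 1 := by
            simp [List.count_cons]
          rw [hcc, hcf]
          have ht : t = List.replicate (t.count false) false := by
            nth_rewrite 1 [h]
            rw [hct]
            simp
          simp only [List.replicate_zero, List.nil_append, List.replicate_succ]
          exact congrArg (false :: ·) ht
        · left
          obtain ⟨c, hc⟩ : ∃ c, t.count true = c + 1 :=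
            ⟨t.count true - 1, by omega⟩
          refine ⟨[], List.replicate c true ++ List.replicate (t.count false) false, ?_⟩
          have ht : t = true :: (List.replicate c true ++ List.replicate (t.count false) false) := by
            nth_rewrite 1 [h]
            rw [hc, List.replicate_succ]
            rfl
          rw [List.nil_append]
          conv_lhs => rw [ht]
      · right
        have hcc : (true :: t).count true = t.count true + 1 := by
          simp [List.count_cons]
        have hcf : (true :: t).count false = t.count false := by
          simp [List.count_cons]
        rw [hcc, hcf, List.replicate_succ, List.cons_append]
        exact congrArg (true :: ·) h

def mu (D : List Bool) : ℕ :=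
  ∑ i ∈ Finset.range D.length, (if D.getD i false = true then i else 0)

lemma mu_split (N p q : ℕ) (hp : p < N) (hq : q < N) (hpq : p ≠ q) (f : ℕ → ℕ) :
    ∑ i ∈ Finset.range N, f i = (∑ i ∈ Finset.range N \ {p, q}, f i) + (f p + f q) := by
  have h1 : ({p, q} : Finset ℕ) ⊆ Finset.range N := by
    intro x hx; simp only [Finset.mem_insert, Finset.mem_singleton] at hx
    rcases hx with rfl | rfl <;> exact Finset.mem_range.mpr (by omega)
  rw [← Finset.sum_sdiff h1, Finset.sum_pair hpq]

lemma move_mu (A B : List Bool) :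
    mu (A ++ true :: false :: B) + 1 = mu (A ++ false :: true :: B) := by
  set p := A.length with hp
  have hL : (A ++ true :: false :: B).length = (A ++ false :: true :: B).length :=
    move_length A B
  have hpN : p + 1 < (A ++ false :: true :: B).length := by
    rw [List.length_append, List.length_cons, List.length_cons]; omega
  rw [mu, mu, hL]
  rw [mu_split _ p (p+1) (by omega) hpN (by omega),
    mu_split _ p (p+1) (by omega) hpN (by omega)]
  have e1 : (∑ i ∈ Finset.range (A ++ false :: true :: B).length \ {p, p+1},
      (if (A ++ true :: false :: B).getD i false = true then i else 0))
      = (∑ i ∈ Finset.range (A ++ false :: true :: B).length \ {p, p+1},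
      (if (A ++ false :: true :: B).getD i false = true then i else 0)) := by
    apply Finset.sum_congr rfl
    intro i hi
    simp only [Finset.mem_sdiff, Finset.mem_range, Finset.mem_insert, Finset.mem_singleton] at hi
    rw [move_getD A B true false false true i false (by tauto) (by tauto)]
  rw [e1]
  rw [getD_move_p A B true false false, getD_move_p A B false true false,
    getD_move_p1 A B true false false, getD_move_p1 A B false true false]
  simp only [eq_self_iff_true, if_true, Bool.false_eq_true, if_false]
  omega

lemma getD_replicate (N i : ℕ) (h : i < N) (a d : Bool) :
    (List.replicate N a).getD i d = a := by
  simp [List.getD_eq_getElem?_getD, List.getElem?_replicate, h]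

section Base
variable (m n : ℕ)

lemma base_getD_lt {i : ℕ} (hi : i < n) (d : Bool) :
    (List.replicate n true ++ List.replicate m false).getD i d = true := by
  rw [getD_append_left _ _ i (by simp [List.length_replicate]; omega) d]
  exact getD_replicate n i hi true d

lemma base_getD_ge {t : ℕ} (ht : t < m) (d : Bool) :
    (List.replicate n true ++ List.replicate m false).getD (n + t) d = false := by
  have h := getD_append_add (List.replicate n true) (List.replicate m false) t d
  rw [List.length_replicate] at h
  rw [h]
  exact getD_replicate m t ht false d

lemma base_nSteps (k : ℕ) :
    nSteps (List.replicate n true ++ List.replicate m false) k = min k n := by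
  rw [nSteps, List.take_append, List.take_replicate, List.take_replicate,
    List.count_append, List.length_replicate]
  simp [List.count_replicate]

lemma base_eSteps (k : ℕ) :
    eSteps (List.replicate n true ++ List.replicate m false) k = min (k - n) m := by
  rw [eSteps, List.take_append, List.take_replicate, List.take_replicate,
    List.count_append, List.length_replicate]
  simp [List.count_replicate]

lemma base_rank_le {k : ℕ} (hk : k ≤ n) :
    rank m n (List.replicate n true ++ List.replicate m false) k = (m : ℤ) * k := by
  rw [rank, base_nSteps, base_eSteps]
  have h1 : min k n = k := by omega
  have h2 : min (k - n) m = 0 := by omega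
  rw [h1, h2]
  simp

lemma base_rank_ge {t : ℕ} (ht : t ≤ m) :
    rank m n (List.replicate n true ++ List.replicate m false) (n + t)
      = (m : ℤ) * n - (n : ℤ) * t := by
  rw [rank, base_nSteps, base_eSteps]
  have h1 : min (n + t) n = n := by omega
  have h2 : min (n + t - n) m = t := by omega
  rw [h1, h2]

lemma base_XY (hm : 0 < m) (hn : 0 < n) :
    XI m n (List.replicate n true ++ List.replicate m false)
      = YI m n (List.replicate n true ++ List.replicate m false) := by
  set D0 : List Bool := List.replicate n true ++ List.replicate m false with hD0
  rw [XI, YI]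
  apply Finset.card_bij (fun q _ => ((n - 1 - q.1, 2*n + m - 1 - q.2) : ℕ × ℕ))
  · rintro ⟨i, j⟩ hij
    simp only [Finset.mem_filter, Finset.mem_product, Finset.mem_range] at hij ⊢
    obtain ⟨⟨hi, hj⟩, hstepi, hstepj, hlt⟩ := hij
    -- i < n
    have hin : i < n := by
      by_contra hcon
      have ht : i - n < m := by omega
      have := base_getD_ge m n ht false
      rw [show n + (i - n) = i by omega] at this
      rw [hstepi] at this
      exact absurd this (by simp)
    -- j ≥ n
    have hjn : n ≤ j := by
      by_contra hcon
      have := base_getD_lt m n (by omega : j < n) true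
      rw [hstepj] at this
      exact absurd this (by simp)
    have hi' : n - 1 - i < n := by omega
    have hj'lo : n ≤ 2*n + m - 1 - j := by omega
    have hj'hi : 2*n + m - 1 - j < m + n := by omega
    refine ⟨⟨by omega, by omega⟩, ?_, ?_, ?_⟩
    · exact base_getD_lt m n hi' false
    · have := base_getD_ge m n (by omega : (2*n + m - 1 - j) - n < m) true
      rw [show n + ((2*n + m - 1 - j) - n) = 2*n + m - 1 - j by omega] at this
      exact this
    · -- rank inequality
      have r1 : rank m n D0 i = (m:ℤ) * i := base_rank_le m n (by omega)
      have r2 : rank m n D0 j = (m:ℤ)*n - (n:ℤ)*(j - n : ℕ) := by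
        have := base_rank_ge m n (by omega : j - n ≤ m)
        rw [show n + (j - n) = j by omega] at this
        exact this
      have r3 : rank m n D0 ((n - 1 - i) + 1) = (m:ℤ) * ((n - 1 - i : ℕ) + 1 : ℕ) :=
        base_rank_le m n (by omega)
      have r4 : rank m n D0 ((2*n + m - 1 - j) + 1)
          = (m:ℤ)*n - (n:ℤ)*((2*n + m - 1 - j) + 1 - n : ℕ) := by
        have := base_rank_ge m n (by omega : (2*n + m - 1 - j) + 1 - n ≤ m)
        rw [show n + ((2*n + m - 1 - j) + 1 - n) = (2*n + m - 1 - j) + 1 by omega] at this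
        exact this
      rw [r1, r2] at hlt
      rw [r3, r4]
      have c1 : (((n - 1 - i : ℕ) + 1 : ℕ) : ℤ) = (n:ℤ) - i := by omega
      have c2 : (((2*n + m - 1 - j) + 1 - n : ℕ) : ℤ) = (n:ℤ) + m - j := by omega
      have c3 : ((j - n : ℕ) : ℤ) = (j:ℤ) - n := by omega
      rw [c1, c2]
      rw [c3] at hlt
      nlinarith [hlt]
  · rintro ⟨i, j⟩ hij ⟨i', j'⟩ hij' heq
    simp only [Finset.mem_filter, Finset.mem_product, Finset.mem_range] at hij hij'
    simp only [Prod.mk.injEq] at heq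
    obtain ⟨⟨hi, hj⟩, hstepi, hstepj, _⟩ := hij
    obtain ⟨⟨hi2, hj2⟩, hstepi2, hstepj2, _⟩ := hij'
    have hin : i < n := by
      by_contra hcon
      have ht : i - n < m := by omega
      have := base_getD_ge m n ht false
      rw [show n + (i - n) = i by omega] at this
      rw [hstepi] at this
      exact absurd this (by simp)
    have hin2 : i' < n := by
      by_contra hcon
      have ht : i' - n < m := by omega
      have := base_getD_ge m n ht false
      rw [show n + (i' - n) = i' by omega] at this
      rw [hstepi2] at this
      exact absurd this (by simp)
    have hjn : n ≤ j := by
      by_contra hcon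
      have := base_getD_lt m n (by omega : j < n) true
      rw [hstepj] at this
      exact absurd this (by simp)
    have hjn2 : n ≤ j' := by
      by_contra hcon
      have := base_getD_lt m n (by omega : j' < n) true
      rw [hstepj2] at this
      exact absurd this (by simp)
    have := heq.1
    have := heq.2
    simp only [Prod.mk.injEq]
    omega
  · rintro ⟨i', j'⟩ hij
    simp only [Finset.mem_filter, Finset.mem_product, Finset.mem_range] at hij
    obtain ⟨⟨hi, hj⟩, hstepi, hstepj, hlt⟩ := hij
    have hin : i' < n := by
      by_contra hcon
      have ht : i' - n < m := by omega
      have := base_getD_ge m n ht false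
      rw [show n + (i' - n) = i' by omega] at this
      rw [hstepi] at this
      exact absurd this (by simp)
    have hjn : n ≤ j' := by
      by_contra hcon
      have := base_getD_lt m n (by omega : j' < n) true
      rw [hstepj] at this
      exact absurd this (by simp)
    refine ⟨⟨n - 1 - i', 2*n + m - 1 - j'⟩, ?_, ?_⟩
    · simp only [Finset.mem_filter, Finset.mem_product, Finset.mem_range]
      have hi'' : n - 1 - i' < n := by omega
      have hj''lo : n ≤ 2*n + m - 1 - j' := by omega
      have hj''hi : 2*n + m - 1 - j' < m + n := by omega
      refine ⟨⟨by omega, by omega⟩, ?_, ?_, ?_⟩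
      · exact base_getD_lt m n hi'' false
      · have := base_getD_ge m n (by omega : (2*n + m - 1 - j') - n < m) true
        rw [show n + ((2*n + m - 1 - j') - n) = 2*n + m - 1 - j' by omega] at this
        exact this
      · have r1 : rank m n D0 (n - 1 - i') = (m:ℤ) * ((n - 1 - i' : ℕ) : ℕ) :=
          base_rank_le m n (by omega)
        have r2 : rank m n D0 (2*n + m - 1 - j')
            = (m:ℤ)*n - (n:ℤ)*((2*n + m - 1 - j') - n : ℕ) := by
          have := base_rank_ge m n (by omega : (2*n + m - 1 - j') - n ≤ m)
          rw [show n + ((2*n + m - 1 - j') - n) = 2*n + m - 1 - j' by omega] at this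
          exact this
        have r3 : rank m n D0 (i' + 1) = (m:ℤ) * ((i' + 1 : ℕ) : ℕ) :=
          base_rank_le m n (by omega)
        have r4 : rank m n D0 (j' + 1)
            = (m:ℤ)*n - (n:ℤ)*((j' + 1 - n : ℕ)) := by
          have := base_rank_ge m n (by omega : j' + 1 - n ≤ m)
          rw [show n + (j' + 1 - n) = j' + 1 by omega] at this
          exact this
        rw [r3, r4] at hlt
        rw [r1, r2]
        have c1 : ((n - 1 - i' : ℕ) : ℤ) = (n:ℤ) - 1 - i' := by omega
        have c2 : (((2*n + m - 1 - j') - n : ℕ) : ℤ) = (n:ℤ) + m - 1 - j' := by omega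
        have c3 : ((j' + 1 - n : ℕ) : ℤ) = (j':ℤ) + 1 - n := by omega
        have c4 : (((i' : ℕ) + 1 : ℕ) : ℤ) = (i':ℤ) + 1 := by omega
        rw [c1, c2]
        rw [c3, c4] at hlt
        nlinarith [hlt]
    · simp only [Prod.mk.injEq]
      constructor <;> omega

end Base

lemma XI_eq_YI (m n : ℕ) (hm : 0 < m) (hn : 0 < n) :
    ∀ D, IsPath m n D → XI m n D = YI m n D := by
  suffices H : ∀ k D, mu D = k → IsPath m n D → XI m n D = YI m n D by
    intro D hP; exact H (mu D) D rfl hP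
  intro k
  induction k using Nat.strong_induction_on with
  | _ k ih =>
    intro D hmu hP
    rcases decomp D with ⟨A, B, rfl⟩ | heq
    · have hP2 := move_isPath m n A B hP
      have hmu2 := move_mu A B
      have hIH := ih (mu (A ++ true :: false :: B)) (by omega) _ rfl hP2
      have hkey := move_key m n hm hn A B hP
      rw [hIH] at hkey
      omega
    · have hct : D.count true = n := hP.2
      have hcf : D.count false = m := by
        have := count_true_add_count_false D
        rw [hP.1, hct] at this
        omega
      rw [heq, hct, hcf]
      exact base_XY m n hm hn

theorem codinv_rank_complement' (m n : ℕ) (hm : 0 < m) (hn : 0 < n)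
    (hco : Nat.Coprime m n) (D D' : List Bool)
    (hD : IsDyck m n D) (hD' : IsDyck m n D')
    (hcomp : ∃ M : ℤ, rankSet m n D' = (rankSet m n D).image (fun r => M - r)) :
    codinv m n D' = codinv m n D := by
  obtain ⟨M, hM⟩ := hcomp
  have h1 : codinv m n D' = YI m n D :=
    codinv_complement m n D D' hD.1 hD' hco hm (by omega) M hM
  have h2 : codinv m n D = XI m n D := codinv_eq_XI m n D hD.1 hco
  have h3 : XI m n D = YI m n D := XI_eq_YI m n hm hn D hD.1
  omega

/-- The rank complement preserves the (co)dinv statistic: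
`codinv(D̄) = codinv(D)` for every `(m,n)`-Dyck path `D`. -/
theorem codinv_rank_complement (m n : ℕ) (hm : 0 < m) (hn : 0 < n)
    (hco : Nat.Coprime m n) (D D' : List Bool)
    (hD : IsDyck m n D) (hD' : IsDyck m n D')
    (hcomp : IsRankComplement m n D D') :
    codinv m n D' = codinv m n D := by
  obtain ⟨M, hMg, hMeq⟩ := hcomp
  exact codinv_rank_complement' m n hm hn hco D D' hD hD' ⟨M, hMeq⟩
end

section
/- Let m, n be coprime positive integers and let λ be an (m,n)-core with first-column hook lengths H = {h_1 > ... > h_a}. For each i, the number of cells in row i of λ with hook length less than m equals the number of elements of S^m(H) that are smaller than h_i, where S^m(H) = {s_0,...,s_{m-1}} and s_j is the largest element of (m + H) ∪ {j} congruent to j mod m. -/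
open Nat

/-! ### Auxiliary machinery -/

/-- `yv L i j = h_i - hook L i j`: the co-hook value of cell `(i,j)`. -/
def yv (L : List ℕ) (i j : ℕ) : ℕ :=
  j + (L.drop (i + 1)).countP (fun x => !decide (j < x))

lemma partition_pos {L : List ℕ} (hL : IsPartition L) {k : ℕ} (hk : k < L.length) :
    0 < L.getD k 0 := by
  rw [List.getD_eq_getElem _ _ hk]
  exact hL.2 _ (List.getElem_mem _)

lemma partition_anti {L : List ℕ} (hL : IsPartition L) {a b : ℕ} (hab : a ≤ b)
    (hb : b < L.length) : L.getD b 0 ≤ L.getD a 0 := by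
  rcases lt_or_eq_of_le hab with h | rfl
  · rw [List.getD_eq_getElem _ _ hb, List.getD_eq_getElem _ _ (h.trans hb)]
    exact List.pairwise_iff_getElem.mp hL.1 a b (h.trans hb) hb h
  · rfl

lemma hook_first {L : List ℕ} (hL : IsPartition L) {k : ℕ} (hk : k < L.length) :
    hook L k 0 = L.getD k 0 + (L.length - (k + 1)) := by
  unfold hook
  rw [Nat.sub_zero]
  congr 1
  rw [List.countP_eq_length.mpr, List.length_drop]
  intro x hx
  simpa using hL.2 x (List.drop_subset _ _ hx)

lemma hook_lt {L : List ℕ} (hL : IsPartition L) {k k' : ℕ} (h : k < k') (hk' : k' < L.length) :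
    hook L k' 0 < hook L k 0 := by
  rw [hook_first hL hk', hook_first hL (h.trans hk')]
  have h1 := partition_anti hL h.le hk'
  have h2 := partition_pos hL hk'
  omega

lemma hook_le_hook {L : List ℕ} (hL : IsPartition L) {k k' : ℕ} (h : k ≤ k')
    (hk' : k' < L.length) : hook L k' 0 ≤ hook L k 0 := by
  rcases lt_or_eq_of_le h with h | rfl
  · exact (hook_lt hL h hk').le
  · exact le_refl _

lemma hook_pos {L : List ℕ} {i j : ℕ} (hj : j < L.getD i 0) : 0 < hook L i j := by
  unfold hook; omega

lemma hook_add_yv {L : List ℕ} (hL : IsPartition L) {i j : ℕ} (hi : i < L.length)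
    (hj : j < L.getD i 0) : hook L i j + yv L i j = hook L i 0 := by
  rw [hook_first hL hi]
  unfold hook yv
  have hc := List.length_eq_countP_add_countP (p := fun x => decide (j < x)) (l := L.drop (i+1))
  rw [List.length_drop] at hc
  have hcc : (L.drop (i+1)).countP (fun x => decide ¬(decide (j < x) = true))
      = (L.drop (i+1)).countP (fun x => !decide (j < x)) := by
    apply List.countP_congr
    intro x _
    by_cases h : j < x <;> simp [h]
  omega

lemma yv_strict {L : List ℕ} {i j j' : ℕ} (h : j < j') : yv L i j < yv L i j' := by
  unfold yv
  have hc : (L.drop (i+1)).countP (fun x => !decide (j < x))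
      ≤ (L.drop (i+1)).countP (fun x => !decide (j' < x)) := by
    apply List.countP_mono_left
    intro x _ hx
    simp only [Bool.not_eq_true', decide_eq_false_iff_not, not_lt] at hx ⊢
    omega
  omega

lemma drop_mem_le {L : List ℕ} (hL : IsPartition L) {t : ℕ} (ht : t < L.length) :
    ∀ x ∈ L.drop t, x ≤ L.getD t 0 := by
  intro x hx
  obtain ⟨idx, hidx, rfl⟩ := List.mem_iff_getElem.mp hx
  rw [List.getElem_drop]
  rw [List.length_drop] at hidx
  have := partition_anti hL (Nat.le_add_right t idx) (by omega)
  rwa [List.getD_eq_getElem _ _ (show t + idx < L.length by omega)] at this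

lemma take_drop_mem_ge {L : List ℕ} (hL : IsPartition L) {i t : ℕ} (hit : i < t)
    (ht : t < L.length) : ∀ x ∈ (L.drop (i+1)).take (t - i), L.getD t 0 ≤ x := by
  intro x hx
  obtain ⟨idx, hidx, rfl⟩ := List.mem_iff_getElem.mp hx
  rw [List.getElem_take]
  rw [List.length_take, List.length_drop] at hidx
  rw [List.getElem_drop]
  have h1 : i + 1 + idx ≤ t := by omega
  have := partition_anti hL h1 ht
  rwa [List.getD_eq_getElem _ _ (show i + 1 + idx < L.length by omega)] at this

lemma yv_lt_hook {L : List ℕ} (hL : IsPartition L) {i j : ℕ} (hi : i < L.length)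
    (hj : j < L.getD i 0) : yv L i j < hook L i 0 := by
  have h1 := hook_add_yv hL hi hj
  have h2 := hook_pos hj
  omega

lemma mem_firstColHooks {L : List ℕ} {x : ℕ} :
    x ∈ firstColHooks L ↔ ∃ t, t < L.length ∧ hook L t 0 = x := by
  simp [firstColHooks]

lemma yv_not_mem {L : List ℕ} (hL : IsPartition L) {i j : ℕ} (hi : i < L.length)
    (hj : j < L.getD i 0) : yv L i j ∉ firstColHooks L := by
  intro hmem
  obtain ⟨t, ht, hteq⟩ := mem_firstColHooks.mp hmem
  rcases le_or_gt t i with hti | hit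
  · have h1 := hook_le_hook hL hti hi
    have h2 := yv_lt_hook hL hi hj
    omega
  · rcases le_or_gt (L.getD t 0) j with hcase | hcase
    · -- L_t ≤ j : yv too big
      have hsub : (L.drop t).Sublist (L.drop (i+1)) := by
        have heq : L.drop t = (L.drop (i+1)).drop (t - (i+1)) := by
          rw [List.drop_drop]
          congr 1
          omega
        rw [heq]
        exact List.drop_sublist _ _
      have hall : (L.drop t).countP (fun x => !decide (j < x)) = (L.drop t).length := by
        apply List.countP_eq_length.mpr
        intro x hx
        have := drop_mem_le hL ht x hx
        simp only [Bool.not_eq_true', decide_eq_false_iff_not, not_lt]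
        omega
      have hle := List.Sublist.countP_le (p := fun x => !decide (j < x)) hsub
      rw [hall, List.length_drop] at hle
      have hyv : L.getD t 0 + (L.length - t) ≤ yv L i j := by
        unfold yv
        omega
      rw [hook_first hL ht] at hteq
      omega
    · -- j < L_t : yv too small
      have hsplit := List.take_append_drop (t - i) (L.drop (i+1))
      have hcnt : (L.drop (i+1)).countP (fun x => !decide (j < x)) =
          ((L.drop (i+1)).take (t - i)).countP (fun x => !decide (j < x)) +
          ((L.drop (i+1)).drop (t - i)).countP (fun x => !decide (j < x)) := by
        conv_lhs => rw [← hsplit]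
        rw [List.countP_append]
      have hz : ((L.drop (i+1)).take (t - i)).countP (fun x => !decide (j < x)) = 0 := by
        apply List.countP_eq_zero.mpr
        intro x hx
        have := take_drop_mem_ge hL hit ht x hx
        simp only [Bool.not_eq_true', decide_eq_false_iff_not, not_lt, Bool.not_eq_false,
          decide_eq_true_eq]
        omega
      have hlen : ((L.drop (i+1)).drop (t - i)).countP (fun x => !decide (j < x))
          ≤ L.length - (t + 1) := by
        calc ((L.drop (i+1)).drop (t - i)).countP (fun x => !decide (j < x))
            ≤ ((L.drop (i+1)).drop (t - i)).length := List.countP_le_length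
          _ = L.length - (t + 1) := by
              rw [List.drop_drop, List.length_drop]
              congr 1
              omega
      have hyv : yv L i j ≤ j + (L.length - (t + 1)) := by
        unfold yv
        omega
      rw [hook_first hL ht] at hteq
      omega

lemma yv_surj {L : List ℕ} (hL : IsPartition L) {i : ℕ} (hi : i < L.length) {x : ℕ}
    (hx : x < hook L i 0) (hnx : x ∉ firstColHooks L) :
    ∃ j < L.getD i 0, yv L i j = x := by
  classical
  have hyvinj : Set.InjOn (yv L i) (Finset.range (L.getD i 0)) := by
    intro a _ b _ hab
    rcases lt_trichotomy a b with h | h | h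
    · exact absurd hab (yv_strict h).ne
    · exact h
    · exact absurd hab.symm (yv_strict h).ne
  have hTC : (Finset.range (L.getD i 0)).image (yv L i) ⊆
      (Finset.range (hook L i 0)).filter (fun z => z ∉ firstColHooks L) := by
    intro z hz
    obtain ⟨j, hj, rfl⟩ := Finset.mem_image.mp hz
    rw [Finset.mem_range] at hj
    exact Finset.mem_filter.mpr ⟨Finset.mem_range.mpr (yv_lt_hook hL hi hj),
      yv_not_mem hL hi hj⟩
  have hTcard : ((Finset.range (L.getD i 0)).image (yv L i)).card = L.getD i 0 := by
    rw [Finset.card_image_of_injOn hyvinj, Finset.card_range]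
  -- card of hooks below hook i 0
  have hinj2 : Set.InjOn (fun t => hook L t 0)
      ((Finset.range L.length).filter (fun t => i < t)) := by
    intro a ha b hb hab
    simp only [Finset.coe_filter, Set.mem_setOf_eq, Finset.mem_range] at ha hb
    rcases lt_trichotomy a b with h | h | h
    · exact absurd hab (hook_lt hL h hb.1).ne'
    · exact h
    · exact absurd hab (hook_lt hL h ha.1).ne
  have hHset : (Finset.range (hook L i 0)).filter (fun z => z ∈ firstColHooks L) =
      ((Finset.range L.length).filter (fun t => i < t)).image (fun t => hook L t 0) := by
    ext z
    simp only [Finset.mem_filter, Finset.mem_range, Finset.mem_image, mem_firstColHooks]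
    constructor
    · rintro ⟨hzlt, t, ht, rfl⟩
      refine ⟨t, ⟨ht, ?_⟩, rfl⟩
      by_contra hc
      push_neg at hc
      have := hook_le_hook hL hc hi
      omega
    · rintro ⟨t, ⟨ht, hit⟩, rfl⟩
      exact ⟨hook_lt hL hit ht, t, ht, rfl⟩
  have hIco : (Finset.range L.length).filter (fun t => i < t) = Finset.Ico (i+1) L.length := by
    ext t
    simp only [Finset.mem_filter, Finset.mem_range, Finset.mem_Ico]
    omega
  have hHcard : ((Finset.range (hook L i 0)).filter (fun z => z ∈ firstColHooks L)).card
      = L.length - (i + 1) := by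
    rw [hHset, Finset.card_image_of_injOn hinj2, hIco, Nat.card_Ico]
  have hsum := Finset.card_filter_add_card_filter_not
    (s := Finset.range (hook L i 0)) (p := fun z => z ∈ firstColHooks L)
  rw [Finset.card_range, hHcard] at hsum
  have hf := hook_first hL hi
  have hCcard : ((Finset.range (hook L i 0)).filter (fun z => z ∉ firstColHooks L)).card
      = L.getD i 0 := by omega
  have hTeq : (Finset.range (L.getD i 0)).image (yv L i) =
      (Finset.range (hook L i 0)).filter (fun z => z ∉ firstColHooks L) :=
    Finset.eq_of_subset_of_card_le hTC (by omega)
  have hxmem : x ∈ (Finset.range (hook L i 0)).filter (fun z => z ∉ firstColHooks L) :=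
    Finset.mem_filter.mpr ⟨Finset.mem_range.mpr hx, hnx⟩
  rw [← hTeq] at hxmem
  obtain ⟨j, hj, hje⟩ := Finset.mem_image.mp hxmem
  exact ⟨j, Finset.mem_range.mp hj, hje⟩

lemma core_flush {m : ℕ} (hm : 0 < m) {L : List ℕ} (hL : IsPartition L) (hc : IsCore m L) :
    IsFlush m (firstColHooks L) := by
  constructor
  · intro h hh
    obtain ⟨t, ht, rfl⟩ := mem_firstColHooks.mp hh
    exact hc t ht 0 (partition_pos hL ht)
  · intro h hh hmh
    obtain ⟨t, ht, rfl⟩ := mem_firstColHooks.mp hh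
    by_contra hnot
    have hx : hook L t 0 - m < hook L t 0 := by omega
    obtain ⟨j, hj, hyj⟩ := yv_surj hL ht hx hnot
    have hadd := hook_add_yv hL ht hj
    have hjm : hook L t j = m := by omega
    exact hc t ht j hj (by rw [hjm])

lemma flush_descend {m : ℕ} {H : Finset ℕ} (hf : IsFlush m H) :
    ∀ h, h ∈ H → ∀ y, 0 < y → y % m = h % m → y ≤ h → y ∈ H := by
  intro h
  induction h using Nat.strong_induction_on with
  | _ h ih =>
    intro hh y hy hmod hle
    rcases eq_or_lt_of_le hle with rfl | hlt
    · exact hh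
    · have hdvd : m ∣ h - y := (Nat.modEq_iff_dvd' hle).mp hmod
      have hm0 : 0 < m := by
        rcases Nat.eq_zero_or_pos m with rfl | h0
        · rw [Nat.zero_dvd] at hdvd; omega
        · exact h0
      have hmle : m ≤ h - y := Nat.le_of_dvd (by omega) hdvd
      have hmh : m < h := by omega
      have h1 : h - m ∈ H := hf.2 h hh hmh
      have h2 : (h - m) % m = h % m := by
        conv_rhs => rw [← Nat.sub_add_cancel hmh.le, Nat.add_mod_right]
      exact ih (h - m) (by omega) h1 y hy (by rw [hmod, h2]) (by omega)

lemma sFun_mod {m : ℕ} {H : Finset ℕ} {r : ℕ} (hr : r < m) : sFun m H r % m = r := by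
  have hmem := Finset.max'_mem
    (insert r ((H.filter (fun h => h % m = r % m)).image (fun h => h + m)))
    (Finset.insert_nonempty _ _)
  unfold sFun
  rcases Finset.mem_insert.mp hmem with h | h
  · rw [h]; exact Nat.mod_eq_of_lt hr
  · obtain ⟨h', hh', hre⟩ := Finset.mem_image.mp h
    rw [← hre, Nat.add_mod_right, (Finset.mem_filter.mp hh').2]
    exact Nat.mod_eq_of_lt hr

lemma le_sFun {m : ℕ} {H : Finset ℕ} (r : ℕ) : r ≤ sFun m H r := by
  unfold sFun
  exact Finset.le_max' _ _ (Finset.mem_insert_self _ _)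

lemma add_le_sFun {m : ℕ} {H : Finset ℕ} {r h : ℕ} (hh : h ∈ H) (hmod : h % m = r % m) :
    h + m ≤ sFun m H r := by
  unfold sFun
  apply Finset.le_max'
  apply Finset.mem_insert_of_mem
  rw [Finset.mem_image]
  exact ⟨h, Finset.mem_filter.mpr ⟨hh, hmod⟩, rfl⟩

/-- For an `(m,n)`-core `λ` with first-column hook lengths `H`,
the number of cells in row `i` with hook length `< m` equals the number of
elements of `S^m(H)` smaller than `h_i`. -/
theorem boundary_cells_count (m n : ℕ) (hm : 0 < m) (hn : 0 < n)
    (hco : Nat.Coprime m n) (L : List ℕ) (hL : IsPartition L)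
    (hmc : IsCore m L) (hnc : IsCore n L) (i : ℕ) (hi : i < L.length) :
    ((Finset.range (L.getD i 0)).filter (fun j => hook L i j < m)).card =
      ((sSet m (firstColHooks L)).filter (fun s => s < hook L i 0)).card := by
  classical
  set H := firstColHooks L with hHdef
  have hflush : IsFlush m H := core_flush hm hL hmc
  have hHi : hook L i 0 ∈ H := mem_firstColHooks.mpr ⟨i, hi, rfl⟩
  apply Finset.card_bij (fun j _ => sFun m H (yv L i j % m))
  · -- maps into target
    intro j hj
    rw [Finset.mem_filter, Finset.mem_range] at hj
    obtain ⟨hjlt, hjm⟩ := hj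
    have hadd := hook_add_yv hL hi hjlt
    have hpos := hook_pos hjlt
    have hyvlt : yv L i j < hook L i 0 := by omega
    have hrm : yv L i j % m < m := Nat.mod_lt _ hm
    refine Finset.mem_filter.mpr ⟨Finset.mem_image.mpr ⟨_, Finset.mem_range.mpr hrm, rfl⟩, ?_⟩
    unfold sFun
    rw [Finset.max'_lt_iff]
    intro b hb
    rcases Finset.mem_insert.mp hb with rfl | hb
    · exact lt_of_le_of_lt (Nat.mod_le _ _) hyvlt
    · obtain ⟨h', hh', rfl⟩ := Finset.mem_image.mp hb
      have hh'H := (Finset.mem_filter.mp hh').1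
      have hh'mod : h' % m = yv L i j % m := by
        have h2 := (Finset.mem_filter.mp hh').2
        rwa [Nat.mod_mod_of_dvd _ dvd_rfl] at h2
      have hne : h' ≠ yv L i j := fun he => yv_not_mem hL hi hjlt (he ▸ hh'H)
      rcases lt_or_gt_of_ne hne with hlt | hgt
      · have hdvd : m ∣ yv L i j - h' := (Nat.modEq_iff_dvd' hlt.le).mp hh'mod
        have := Nat.le_of_dvd (by omega) hdvd
        omega
      · exfalso
        rcases Nat.eq_zero_or_pos (yv L i j) with hz | hz
        · apply hflush.1 h' hh'H
          apply Nat.dvd_of_mod_eq_zero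
          rw [hh'mod, hz]
          exact Nat.zero_mod m
        · exact yv_not_mem hL hi hjlt
            (flush_descend hflush h' hh'H _ hz hh'mod.symm hgt.le)
  · -- injective
    intro j1 hj1 j2 hj2 heq
    rw [Finset.mem_filter, Finset.mem_range] at hj1 hj2
    have key : ∀ a b : ℕ, a < L.getD i 0 → hook L i a < m → b < L.getD i 0 →
        hook L i b < m → a < b → yv L i a % m ≠ yv L i b % m := by
      intro a b ha hma hb hmb hab hmod
      have hya := hook_add_yv hL hi ha
      have hyb := hook_add_yv hL hi hb
      have hst : yv L i a < yv L i b := yv_strict hab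
      have hdvd : m ∣ yv L i b - yv L i a := (Nat.modEq_iff_dvd' hst.le).mp hmod
      have := Nat.le_of_dvd (by omega) hdvd
      omega
    have hmod : yv L i j1 % m = yv L i j2 % m := by
      have h1 := sFun_mod (H := H) (Nat.mod_lt (yv L i j1) hm)
      have h2 := sFun_mod (H := H) (Nat.mod_lt (yv L i j2) hm)
      rw [← h1, ← h2, heq]
    rcases lt_trichotomy j1 j2 with h | h | h
    · exact absurd hmod (key _ _ hj1.1 hj1.2 hj2.1 hj2.2 h)
    · exact h
    · exact absurd hmod.symm (key _ _ hj2.1 hj2.2 hj1.1 hj1.2 h)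
  · -- surjective
    intro s hs
    rw [Finset.mem_filter] at hs
    obtain ⟨hsmem, hslt⟩ := hs
    obtain ⟨r, hrmem, hre⟩ := Finset.mem_image.mp hsmem
    rw [Finset.mem_range] at hrmem
    have hrs : r ≤ s := hre ▸ le_sFun r
    have hrI : r < hook L i 0 := lt_of_le_of_lt hrs hslt
    set d := hook L i 0 - 1 - r with hd
    set Y := r + m * (d / m) with hY
    have hdm := Nat.div_add_mod d m
    have hdmlt : d % m < m := Nat.mod_lt _ hm
    have hY1 : Y < hook L i 0 := by omega
    have hY2 : hook L i 0 ≤ Y + m := by omega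
    have hYm : Y % m = r := by
      rw [hY, Nat.add_mul_mod_self_left]
      exact Nat.mod_eq_of_lt hrmem
    have hYnot : Y ∉ H := by
      intro hYH
      have := add_le_sFun (m := m) (H := H) (r := r) hYH
        (by rw [hYm, Nat.mod_eq_of_lt hrmem])
      rw [hre] at this
      omega
    obtain ⟨j, hj, hyj⟩ := yv_surj hL hi hY1 hYnot
    have hadd := hook_add_yv hL hi hj
    have hhjm : hook L i j < m := by
      rcases lt_or_eq_of_le (show hook L i j ≤ m by omega) with h | h
      · exact h
      · exfalso
        have hIY : hook L i 0 = Y + m := by omega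
        have hImod : hook L i 0 % m = r % m := by
          rw [hIY, Nat.add_mod_right, hYm, Nat.mod_eq_of_lt hrmem]
        have := add_le_sFun (m := m) (H := H) hHi hImod
        rw [hre] at this
        omega
    refine ⟨j, Finset.mem_filter.mpr ⟨Finset.mem_range.mpr hj, hhjm⟩, ?_⟩
    rw [hyj, hYm, hre]
end
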